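/- arXiv:1701.07752 — 7 statements merged into one kernel-verified Lean document; each statement's English description precedes it below -/
import Mathlib

section
/- For every integer n ≥ 3 there exists a family F of Hamiltonian paths in the complete graph on the vertex set {1,...,n} with |F| ≥ ⌊n/2⌋!/2^{⌊n/2⌋} such that for any two distinct paths P, Q in F there is a path of 2 edges (on 3 vertices) which is a subpath of one of P, Q and shares no edge with the other. -/
open SimpleGraph

/-- A Hamiltonian path in the complete graph on the vertex set `Fin n` (i.e. `{1,…,n}`):
a walk in `⊤ : SimpleGraph (Fin n)` visiting every vertex exactly once, bundled with its
endpoints. -/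
structure HamPath (n : ℕ) where
  first : Fin n
  last : Fin n
  walk : (⊤ : SimpleGraph (Fin n)).Walk first last
  isHamiltonian : walk.IsHamiltonian

/-- `SepWalks k P Q` : there is a path of `k` edges (on `k+1` vertices) which is entirely
contained (as a subpath, i.e. all of its edges occur) in one of `P`, `Q` and is
edge-disjoint from the other. -/
def SepWalks {n : ℕ} (k : ℕ) {a b c d : Fin n}
    (P : (⊤ : SimpleGraph (Fin n)).Walk a b) (Q : (⊤ : SimpleGraph (Fin n)).Walk c d) :
    Prop :=
  ∃ (x y : Fin n) (w : (⊤ : SimpleGraph (Fin n)).Walk x y),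
    w.IsPath ∧ w.length = k ∧
    (((∀ e ∈ w.edges, e ∈ P.edges) ∧ (∀ e ∈ w.edges, e ∉ Q.edges)) ∨
     ((∀ e ∈ w.edges, e ∈ Q.edges) ∧ (∀ e ∈ w.edges, e ∉ P.edges)))

/-- `Sep k P Q` for bundled Hamiltonian paths. -/
def SepHam {n : ℕ} (k : ℕ) (P Q : HamPath n) : Prop :=
  SepWalks k P.walk Q.walk


def mkWalkF {V : Type*} (g : ℕ → V) : (k : ℕ) → (h : ∀ i, i < k → g i ≠ g (i+1)) →
    (⊤ : SimpleGraph V).Walk (g 0) (g k)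
  | 0, _ => Walk.nil
  | (k+1), h => Walk.concat (mkWalkF g k fun i hi => h i (Nat.lt_succ_of_lt hi))
      (by simp only [top_adj]; exact h k (Nat.lt_succ_self k))

lemma support_mkWalkF {V : Type*} (g : ℕ → V) (k : ℕ) (h : ∀ i, i < k → g i ≠ g (i+1)) :
    (mkWalkF g k h).support = (List.range (k+1)).map g := by
  induction k with
  | zero => simp [mkWalkF, List.range_succ]
  | succ k ih => simp [mkWalkF, Walk.support_concat, ih (fun i hi => h i (Nat.lt_succ_of_lt hi)),
      List.range_succ]

lemma edges_mkWalkF {V : Type*} (g : ℕ → V) (k : ℕ) (h : ∀ i, i < k → g i ≠ g (i+1)) :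
    (mkWalkF g k h).edges = (List.range k).map (fun i => s(g i, g (i+1))) := by
  induction k with
  | zero => simp [mkWalkF, List.range_succ]
  | succ k ih => simp [mkWalkF, Walk.edges_concat, ih (fun i hi => h i (Nat.lt_succ_of_lt hi)),
      List.range_succ]

lemma length_mkWalkF {V : Type*} (g : ℕ → V) (k : ℕ) (h : ∀ i, i < k → g i ≠ g (i+1)) :
    (mkWalkF g k h).length = k := by
  induction k with
  | zero => simp [mkWalkF, List.range_succ]
  | succ k ih => simp [mkWalkF, ih (fun i hi => h i (Nat.lt_succ_of_lt hi))]

/-- Hypotheses on the "gap assignment" function `f`. -/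
structure GoodF (n m : ℕ) (f : ℕ → ℕ) : Prop where
  hm : n = 2*m ∨ n = 2*m + 1
  hn : 3 ≤ n
  flt : ∀ j, j < m → f j < m
  fpar : ∀ j, j < m → f j % 2 = j % 2
  finj : ∀ j j', j < m → j' < m → f j = f j' → j = j'
  fsurj : ∀ k, k < m → ∃ j, j < m ∧ f j = k

namespace GoodF
variable {n m : ℕ} {f : ℕ → ℕ}

lemma npos (G : GoodF n m f) : 0 < n := by have := G.hn; omega
lemma mpos (G : GoodF n m f) : 0 < m := by have := G.hn; rcases G.hm with h | h <;> omega

end GoodF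

def vtx (n : ℕ) (hn : 0 < n) (v : ℕ) : Fin n := ⟨v % n, Nat.mod_lt v hn⟩

lemma vtx_inj {n : ℕ} (hn : 0 < n) {v w : ℕ} (hv : v < n) (hw : w < n)
    (h : vtx n hn v = vtx n hn w) : v = w := by
  simpa [vtx, Nat.mod_eq_of_lt hv, Nat.mod_eq_of_lt hw, Fin.ext_iff] using h

def posN (m : ℕ) (f : ℕ → ℕ) (i : ℕ) : ℕ :=
  if i = 2*m then 2*m else if i % 2 = 1 then m + f (i/2) else i/2

lemma posN_two_mul (m : ℕ) (f : ℕ → ℕ) {j : ℕ} (h : j < m) : posN m f (2*j) = j := by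
  unfold posN
  rw [if_neg (by omega), if_neg (by omega)]
  omega

lemma posN_odd (m : ℕ) (f : ℕ → ℕ) {j : ℕ} (h : j < m) : posN m f (2*j+1) = m + f j := by
  unfold posN
  rw [if_neg (by omega), if_pos (by omega)]
  have : (2*j+1)/2 = j := by omega
  rw [this]

lemma posN_lt {n m : ℕ} {f : ℕ → ℕ} (G : GoodF n m f) {i : ℕ} (hi : i < n) :
    posN m f i < n := by
  have hm := G.hm
  unfold posN
  split
  · omega
  · split
    · have h2 : i / 2 < m := by omega
      have := G.flt _ h2
      omega
    · omega

lemma posN_inj {n m : ℕ} {f : ℕ → ℕ} (G : GoodF n m f) {i i' : ℕ} (hi : i < n) (hi' : i' < n)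
    (h : posN m f i = posN m f i') : i = i' := by
  have hm := G.hm
  have hmp := G.mpos
  unfold posN at h
  by_cases e1 : i = 2*m <;> by_cases e2 : i' = 2*m
  · omega
  · rw [if_pos e1, if_neg e2] at h
    split at h
    · have : i' / 2 < m := by omega
      have := G.flt _ this
      omega
    · omega
  · rw [if_neg e1, if_pos e2] at h
    split at h
    · have : i / 2 < m := by omega
      have := G.flt _ this
      omega
    · omega
  · rw [if_neg e1, if_neg e2] at h
    by_cases p1 : i % 2 = 1 <;> by_cases p2 : i' % 2 = 1
    · rw [if_pos p1, if_pos p2] at h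
      have d1 : i / 2 < m := by omega
      have d2 : i' / 2 < m := by omega
      have := G.finj _ _ d1 d2 (by omega)
      omega
    · rw [if_pos p1, if_neg p2] at h
      have d1 : i / 2 < m := by omega
      have := G.flt _ d1
      omega
    · rw [if_neg p1, if_pos p2] at h
      have d2 : i' / 2 < m := by omega
      have := G.flt _ d2
      omega
    · rw [if_neg p1, if_neg p2] at h
      omega

lemma posN_eq_b {n m : ℕ} {f : ℕ → ℕ} (G : GoodF n m f) {i j : ℕ} (hj : j < m)
    (h : posN m f i = j) : i = 2*j := by
  unfold posN at h
  split at h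
  · omega
  · split at h
    · omega
    · omega

lemma posN_eq_a {n m : ℕ} {f : ℕ → ℕ} (G : GoodF n m f) {i k : ℕ} (hk : k < m) (hi : i < n)
    (h : posN m f i = m + k) : i % 2 = 1 ∧ i / 2 < m ∧ f (i/2) = k := by
  have hm := G.hm
  unfold posN at h
  split at h
  · omega
  · split at h
    · exact ⟨by omega, by omega, by omega⟩
    · omega

def gfun (n m : ℕ) (f : ℕ → ℕ) (hn : 0 < n) : ℕ → Fin n := fun i => vtx n hn (posN m f i)

lemma gfun_adj {n m : ℕ} {f : ℕ → ℕ} (G : GoodF n m f) :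
    ∀ i, i < n - 1 → gfun n m f G.npos i ≠ gfun n m f G.npos (i+1) := by
  intro i hi hEq
  have h1 : posN m f i < n := posN_lt G (by omega)
  have h2 : posN m f (i+1) < n := posN_lt G (by omega)
  have := posN_inj G (show i < n by omega) (show i + 1 < n by omega)
    (vtx_inj G.npos h1 h2 hEq)
  omega

def hamOf (n m : ℕ) (f : ℕ → ℕ) (G : GoodF n m f) : HamPath n where
  first := gfun n m f G.npos 0
  last := gfun n m f G.npos (n-1)
  walk := mkWalkF (gfun n m f G.npos) (n-1) (gfun_adj G)
  isHamiltonian := by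
    intro v
    have hsup : (mkWalkF (gfun n m f G.npos) (n-1) (gfun_adj G)).support
        = (List.range n).map (gfun n m f G.npos) := by
      rw [support_mkWalkF]
      have hx : n - 1 + 1 = n := by have := G.npos; omega
      rw [hx]
    rw [hsup]
    have hnodup : ((List.range n).map (gfun n m f G.npos)).Nodup := by
      refine List.Nodup.map_on ?_ List.nodup_range
      intro x hx y hy hxy
      simp only [List.mem_range] at hx hy
      exact posN_inj G hx hy (vtx_inj G.npos (posN_lt G hx) (posN_lt G hy) hxy)
    refine List.count_eq_one_of_mem hnodup ?_
    -- membership: v is hit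
    have hm := G.hm
    have hmp := G.mpos
    obtain ⟨w, hw⟩ : ∃ w : ℕ, w < n ∧ v = vtx n G.npos w :=
      ⟨v.val, v.isLt, by simp [vtx, Nat.mod_eq_of_lt v.isLt]⟩
    obtain ⟨i, hi, hpi⟩ : ∃ i, i < n ∧ posN m f i = w := by
      rcases Nat.lt_or_ge w m with hwm | hwm
      · exact ⟨2*w, by omega, posN_two_mul m f hwm⟩
      · rcases Nat.lt_or_ge w (2*m) with hw2 | hw2
        · obtain ⟨j, hj, hfj⟩ := G.fsurj (w - m) (by omega)
          exact ⟨2*j+1, by omega, by rw [posN_odd m f hj]; omega⟩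
        · have hweq : w = 2*m := by omega
          exact ⟨2*m, by omega, by unfold posN; rw [if_pos rfl]; omega⟩
    refine List.mem_map.2 ⟨i, List.mem_range.2 hi, ?_⟩
    rw [hw.2, gfun, hpi]

lemma mem_edges_hamOf {n m : ℕ} {f : ℕ → ℕ} (G : GoodF n m f) {e : Sym2 (Fin n)} :
    e ∈ (hamOf n m f G).walk.edges ↔
      ∃ i, i < n - 1 ∧ e = s(gfun n m f G.npos i, gfun n m f G.npos (i+1)) := by
  show e ∈ (mkWalkF _ _ _).edges ↔ _
  rw [edges_mkWalkF]
  simp only [List.mem_map, List.mem_range]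
  constructor
  · rintro ⟨i, hi, rfl⟩; exact ⟨i, hi, rfl⟩
  · rintro ⟨i, hi, rfl⟩; exact ⟨i, hi, rfl⟩

/-- Key certificate: the 2-path `b_{j0} — a_{f j0} — b_{j0+1}` lies in the path of `f`
and is edge-disjoint from the path of `f'`, provided the positions of `a_{f j0}` in the
two paths are distinct and of equal parity. -/
lemma cert {n m : ℕ} {f f' : ℕ → ℕ} (G : GoodF n m f) (G' : GoodF n m f')
    (j0 j' : ℕ) (h0 : j0 < m) (h0' : j0 + 1 < m) (h1 : j' < m) (hne : j0 ≠ j')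
    (hpar : j0 % 2 = j' % 2) (hval : f' j' = f j0) :
    (s(vtx n G.npos j0, vtx n G.npos (m + f j0)) ∈ (hamOf n m f G).walk.edges) ∧
    (s(vtx n G.npos (m + f j0), vtx n G.npos (j0+1)) ∈ (hamOf n m f G).walk.edges) ∧
    (s(vtx n G.npos j0, vtx n G.npos (m + f j0)) ∉ (hamOf n m f' G').walk.edges) ∧
    (s(vtx n G.npos (m + f j0), vtx n G.npos (j0+1)) ∉ (hamOf n m f' G').walk.edges) := by
  have hm := G.hm
  have hk : f j0 < m := G.flt _ h0
  have hv1 : (vtx n G.npos : ℕ → Fin n) = vtx n G'.npos := rfl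
  refine ⟨?_, ?_, ?_, ?_⟩
  · rw [mem_edges_hamOf]
    refine ⟨2*j0, by omega, ?_⟩
    rw [gfun, gfun, posN_two_mul m f h0]
    have : 2*j0 + 1 = 2*j0 + 1 := rfl
    rw [show (2*j0+1) = 2*j0+1 from rfl, posN_odd m f h0]
  · rw [mem_edges_hamOf]
    refine ⟨2*j0+1, by omega, ?_⟩
    rw [gfun, gfun, posN_odd m f h0]
    rw [show (2*j0+1+1) = 2*(j0+1) from by ring, posN_two_mul m f h0']
  · rw [mem_edges_hamOf]
    rintro ⟨i, hi, he⟩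
    rw [gfun, gfun, ← hv1] at he
    have hpi : posN m f' i < n := posN_lt G' (by omega)
    have hpi1 : posN m f' (i+1) < n := posN_lt G' (by omega)
    rcases Sym2.eq_iff.1 he with ⟨ha, hb⟩ | ⟨ha, hb⟩
    · -- posN f' i = j0, posN f' (i+1) = m + f j0
      have e1 : posN m f' i = j0 := (vtx_inj G.npos (by omega) hpi ha).symm
      have e2 : posN m f' (i+1) = m + f j0 := (vtx_inj G.npos (by omega) hpi1 hb).symm
      have hi2 : i = 2*j0 := posN_eq_b G' h0 e1
      obtain ⟨hp, hd, hf⟩ := posN_eq_a G' hk (by omega) e2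
      -- f' ((i+1)/2) = f j0 = f' j', so (i+1)/2 = j', i.e. 2*j0+1 = 2*j'+1
      have := G'.finj _ _ hd h1 (by omega)
      omega
    · -- posN f' i = m + f j0, posN f' (i+1) = j0
      have e1 : posN m f' i = m + f j0 := (vtx_inj G.npos hpi (by omega) hb.symm)
      have e2 : posN m f' (i+1) = j0 := (vtx_inj G.npos hpi1 (by omega) ha.symm)
      obtain ⟨hp, hd, hf⟩ := posN_eq_a G' hk (by omega) e1
      have hij : i / 2 = j' := G'.finj _ _ hd h1 (by omega)
      have hi2 : i + 1 = 2*j0 := posN_eq_b G' h0 e2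
      omega
  · rw [mem_edges_hamOf]
    rintro ⟨i, hi, he⟩
    rw [gfun, gfun, ← hv1] at he
    have hpi : posN m f' i < n := posN_lt G' (by omega)
    have hpi1 : posN m f' (i+1) < n := posN_lt G' (by omega)
    rcases Sym2.eq_iff.1 he with ⟨ha, hb⟩ | ⟨ha, hb⟩
    · -- posN f' i = m + f j0, posN f' (i+1) = j0+1
      have e1 : posN m f' i = m + f j0 := (vtx_inj G.npos (by omega) hpi ha).symm
      have e2 : posN m f' (i+1) = j0 + 1 := (vtx_inj G.npos (by omega) hpi1 hb).symm
      obtain ⟨hp, hd, hf⟩ := posN_eq_a G' hk (by omega) e1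
      have hij : i / 2 = j' := G'.finj _ _ hd h1 (by omega)
      have hi2 : i + 1 = 2*(j0+1) := posN_eq_b G' h0' e2
      omega
    · -- posN f' i = j0+1, posN f' (i+1) = m + f j0
      have e1 : posN m f' i = j0 + 1 := (vtx_inj G.npos hpi (by omega) hb.symm)
      have e2 : posN m f' (i+1) = m + f j0 := (vtx_inj G.npos hpi1 (by omega) ha.symm)
      have hi2 : i = 2*(j0+1) := posN_eq_b G' h0' e1
      obtain ⟨hp, hd, hf⟩ := posN_eq_a G' hk (by omega) e2
      have hij : (i+1) / 2 = j' := G'.finj _ _ hd h1 (by omega)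
      omega

lemma exists_cert_walk {n m : ℕ} {f f' : ℕ → ℕ} (G : GoodF n m f) (G' : GoodF n m f')
    (j0 j' : ℕ) (h0 : j0 < m) (h0' : j0 + 1 < m) (h1 : j' < m) (hne : j0 ≠ j')
    (hpar : j0 % 2 = j' % 2) (hval : f' j' = f j0) :
    ∃ (x y : Fin n) (w : (⊤ : SimpleGraph (Fin n)).Walk x y),
      w.IsPath ∧ w.length = 2 ∧
      (∀ e ∈ w.edges, e ∈ (hamOf n m f G).walk.edges) ∧
      (∀ e ∈ w.edges, e ∉ (hamOf n m f' G').walk.edges) := by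
  have hm := G.hm
  have hk : f j0 < m := G.flt _ h0
  set gw : ℕ → Fin n := fun t =>
    vtx n G.npos (if t = 0 then j0 else if t = 1 then m + f j0 else j0 + 1) with hgw
  have hval0 : gw 0 = vtx n G.npos j0 := rfl
  have hval1 : gw 1 = vtx n G.npos (m + f j0) := rfl
  have hval2 : gw 2 = vtx n G.npos (j0 + 1) := rfl
  have hb1 : j0 < n := by omega
  have hb2 : m + f j0 < n := by omega
  have hb3 : j0 + 1 < n := by omega
  have hadj : ∀ i, i < 2 → gw i ≠ gw (i+1) := by
    intro i hi
    interval_cases i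
    · rw [hval0, hval1]
      intro hcon
      have := vtx_inj G.npos hb1 hb2 hcon
      omega
    · rw [hval1, hval2]
      intro hcon
      have := vtx_inj G.npos hb2 hb3 hcon
      omega
  refine ⟨gw 0, gw 2, mkWalkF gw 2 hadj, ?_, length_mkWalkF gw 2 hadj, ?_, ?_⟩
  · rw [SimpleGraph.Walk.isPath_def, support_mkWalkF]
    have : List.range (2+1) = [0, 1, 2] := rfl
    rw [this]
    simp only [List.map_cons, List.map_nil, List.nodup_cons, List.mem_cons,
      List.not_mem_nil, or_false, List.mem_singleton, List.nodup_nil, and_true]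
    refine ⟨?_, ?_⟩
    · rw [hval0, hval1, hval2]
      push_neg
      constructor
      · intro hcon; have := vtx_inj G.npos hb1 hb2 hcon; omega
      · intro hcon; have := vtx_inj G.npos hb1 hb3 hcon; omega
    · rw [hval1, hval2]
      refine ⟨fun hcon => ?_, not_false⟩
      have := vtx_inj G.npos hb2 hb3 hcon; omega
  · intro e he
    rw [edges_mkWalkF] at he
    have : List.range 2 = [0, 1] := rfl
    rw [this] at he
    simp only [List.map_cons, List.map_nil, List.mem_cons, List.not_mem_nil, or_false,
      List.mem_singleton] at he
    obtain ⟨c1, c2, -, -⟩ := cert G G' j0 j' h0 h0' h1 hne hpar hval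
    rcases he with rfl | rfl
    · rw [hval0, hval1]; exact c1
    · rw [hval1, hval2]; exact c2
  · intro e he
    rw [edges_mkWalkF] at he
    have : List.range 2 = [0, 1] := rfl
    rw [this] at he
    simp only [List.map_cons, List.map_nil, List.mem_cons, List.not_mem_nil, or_false,
      List.mem_singleton] at he
    obtain ⟨-, -, c3, c4⟩ := cert G G' j0 j' h0 h0' h1 hne hpar hval
    rcases he with rfl | rfl
    · rw [hval0, hval1]; exact c3
    · rw [hval1, hval2]; exact c4

lemma support_hamOf {n m : ℕ} {f : ℕ → ℕ} (G : GoodF n m f) :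
    (hamOf n m f G).walk.support = (List.range n).map (gfun n m f G.npos) := by
  show (mkWalkF _ _ _).support = _
  rw [support_mkWalkF]
  have hx : n - 1 + 1 = n := by have := G.npos; omega
  rw [hx]

def ffun (p q : ℕ) (z : Equiv.Perm (Fin p) × Equiv.Perm (Fin q)) : ℕ → ℕ := fun j =>
  if j % 2 = 0 then 2 * (if h : j/2 < p then ((z.1 ⟨j/2, h⟩ : Fin p) : ℕ) else 0)
  else 2 * (if h : j/2 < q then ((z.2 ⟨j/2, h⟩ : Fin q) : ℕ) else 0) + 1

lemma goodF_ffun (n m : ℕ) (hn : 3 ≤ n) (hm : n = 2*m ∨ n = 2*m+1)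
    (z : Equiv.Perm (Fin (m - m/2)) × Equiv.Perm (Fin (m/2))) :
    GoodF n m (ffun (m - m/2) (m/2) z) := by
  constructor
  · exact hm
  · exact hn
  · intro j hj
    unfold ffun
    by_cases hpar : j % 2 = 0
    · rw [if_pos hpar]
      have hlt : j/2 < m - m/2 := by omega
      rw [dif_pos hlt]
      have := (z.1 ⟨j/2, hlt⟩).isLt
      omega
    · rw [if_neg hpar]
      have hlt : j/2 < m/2 := by omega
      rw [dif_pos hlt]
      have := (z.2 ⟨j/2, hlt⟩).isLt
      omega
  · intro j hj
    unfold ffun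
    by_cases hpar : j % 2 = 0
    · rw [if_pos hpar]; omega
    · rw [if_neg hpar]; omega
  · intro j j' hj hj' heq
    unfold ffun at heq
    by_cases p1 : j % 2 = 0 <;> by_cases p2 : j' % 2 = 0
    · rw [if_pos p1, if_pos p2] at heq
      have l1 : j/2 < m - m/2 := by omega
      have l2 : j'/2 < m - m/2 := by omega
      rw [dif_pos l1, dif_pos l2] at heq
      have : (⟨j/2, l1⟩ : Fin (m - m/2)) = ⟨j'/2, l2⟩ := z.1.injective (Fin.ext (by omega))
      simp only [Fin.mk.injEq] at this
      omega
    · rw [if_pos p1, if_neg p2] at heq; omega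
    · rw [if_neg p1, if_pos p2] at heq; omega
    · rw [if_neg p1, if_neg p2] at heq
      have l1 : j/2 < m/2 := by omega
      have l2 : j'/2 < m/2 := by omega
      rw [dif_pos l1, dif_pos l2] at heq
      have : (⟨j/2, l1⟩ : Fin (m/2)) = ⟨j'/2, l2⟩ := z.2.injective (Fin.ext (by omega))
      simp only [Fin.mk.injEq] at this
      omega
  · intro k hk
    by_cases hpar : k % 2 = 0
    · have hkp : k/2 < m - m/2 := by omega
      set t := z.1.symm ⟨k/2, hkp⟩ with ht
      have htl : (t : ℕ) < m - m/2 := t.isLt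
      refine ⟨2*(t : ℕ), by omega, ?_⟩
      unfold ffun
      rw [if_pos (by omega)]
      have h2 : 2*(t : ℕ)/2 = (t : ℕ) := by omega
      rw [h2, dif_pos htl]
      have : (⟨(t : ℕ), htl⟩ : Fin (m - m/2)) = t := Fin.eta t htl
      rw [this, ht, Equiv.apply_symm_apply]
      simp only [Fin.val_mk]
      omega
    · have hkq : k/2 < m/2 := by omega
      set t := z.2.symm ⟨k/2, hkq⟩ with ht
      have htl : (t : ℕ) < m/2 := t.isLt
      refine ⟨2*(t : ℕ)+1, by omega, ?_⟩
      unfold ffun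
      rw [if_neg (by omega)]
      have h2 : (2*(t : ℕ)+1)/2 = (t : ℕ) := by omega
      rw [h2, dif_pos htl]
      have : (⟨(t : ℕ), htl⟩ : Fin (m/2)) = t := Fin.eta t htl
      rw [this, ht, Equiv.apply_symm_apply]
      simp only [Fin.val_mk]
      omega

lemma ffun_even (p q : ℕ) (z : Equiv.Perm (Fin p) × Equiv.Perm (Fin q)) {t : ℕ} (ht : t < p) :
    ffun p q z (2*t) = 2 * ((z.1 ⟨t, ht⟩ : Fin p) : ℕ) := by
  unfold ffun
  rw [if_pos (by omega)]
  have h2 : 2*t/2 = t := by omega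
  simp only [h2]
  rw [dif_pos ht]

lemma ffun_odd (p q : ℕ) (z : Equiv.Perm (Fin p) × Equiv.Perm (Fin q)) {t : ℕ} (ht : t < q) :
    ffun p q z (2*t+1) = 2 * ((z.2 ⟨t, ht⟩ : Fin q) : ℕ) + 1 := by
  unfold ffun
  rw [if_neg (by omega)]
  have h2 : (2*t+1)/2 = t := by omega
  simp only [h2]
  rw [dif_pos ht]

/-- **Theorem 1, lower bound.** For every `n ≥ 3` there is a family `F` of Hamiltonian
paths in `K_n` with `|F| ≥ ⌊n/2⌋! / 2 ^ ⌊n/2⌋` such that any two distinct members are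
`2`-separated. -/
theorem hamPath_two_separated_lower_bound (n : ℕ) (hn : 3 ≤ n) :
    ∃ F : Set (HamPath n),
      (∀ P ∈ F, ∀ Q ∈ F, P ≠ Q → SepHam 2 P Q) ∧
      (((n / 2).factorial : ℝ) / 2 ^ (n / 2) ≤ (F.ncard : ℝ)) := by
  set m := n / 2 with hmdef
  have hm : n = 2*m ∨ n = 2*m+1 := by omega
  have hGf := fun z => goodF_ffun n m hn hm z
  set Φ : Equiv.Perm (Fin (m - m/2)) × Equiv.Perm (Fin (m/2)) → HamPath n :=
    fun z => hamOf n m (ffun (m - m/2) (m/2) z) (hGf z) with hΦdef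
  -- pointwise recovery of the gap function from the path
  have hrecover : ∀ z z', Φ z = Φ z' → ∀ j, j < m →
      ffun (m - m/2) (m/2) z j = ffun (m - m/2) (m/2) z' j := by
    intro z z' hPQ j hj
    have hsup : (List.range n).map (gfun n m (ffun (m - m/2) (m/2) z) (hGf z).npos)
        = (List.range n).map (gfun n m (ffun (m - m/2) (m/2) z') (hGf z').npos) := by
      rw [← support_hamOf (hGf z), ← support_hamOf (hGf z')]
      exact congrArg (fun P : HamPath n => P.walk.support) hPQ
    have hpt := congrArg (fun l : List (Fin n) => l[2*j+1]?) hsup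
    have hjn : 2*j+1 < n := by omega
    simp only [List.getElem?_map, List.getElem?_range hjn, Option.map_some] at hpt
    have h1 : gfun n m (ffun (m - m/2) (m/2) z) (hGf z).npos (2*j+1)
        = gfun n m (ffun (m - m/2) (m/2) z') (hGf z').npos (2*j+1) := by
      exact Option.some.inj hpt
    rw [gfun, gfun, posN_odd m _ hj, posN_odd m _ hj] at h1
    have hb1 : m + ffun (m - m/2) (m/2) z j < n := by have := (hGf z).flt j hj; omega
    have hb2 : m + ffun (m - m/2) (m/2) z' j < n := by have := (hGf z').flt j hj; omega
    have := vtx_inj (hGf z).npos hb1 hb2 h1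
    omega
  -- recovery of the permutation pair from the gap function
  have hext : ∀ z z', (∀ j, j < m →
      ffun (m - m/2) (m/2) z j = ffun (m - m/2) (m/2) z' j) → z = z' := by
    intro z z' hrec
    have hz1 : z.1 = z'.1 := by
      apply Equiv.ext
      intro x
      have hx : 2 * (x : ℕ) < m := by have := x.isLt; omega
      have h := hrec (2*(x : ℕ)) hx
      rw [ffun_even _ _ z x.isLt, ffun_even _ _ z' x.isLt] at h
      have hfe : z.1 ⟨(x : ℕ), x.isLt⟩ = z'.1 ⟨(x : ℕ), x.isLt⟩ := Fin.ext (by omega)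
      exact hfe
    have hz2 : z.2 = z'.2 := by
      apply Equiv.ext
      intro x
      have hx : 2 * (x : ℕ) + 1 < m := by have := x.isLt; omega
      have h := hrec (2*(x : ℕ)+1) hx
      rw [ffun_odd _ _ z x.isLt, ffun_odd _ _ z' x.isLt] at h
      have hfe : z.2 ⟨(x : ℕ), x.isLt⟩ = z'.2 ⟨(x : ℕ), x.isLt⟩ := Fin.ext (by omega)
      exact hfe
    exact Prod.ext hz1 hz2
  have hΦinj : Function.Injective Φ := fun z z' h => hext z z' (hrecover z z' h)
  refine ⟨Set.range Φ, ?_, ?_⟩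
  · rintro P ⟨z, rfl⟩ Q ⟨z', rfl⟩ hne
    have hzz : z ≠ z' := by rintro rfl; exact hne rfl
    have hdiff : ∃ j0, j0 < m ∧ ffun (m - m/2) (m/2) z j0 ≠ ffun (m - m/2) (m/2) z' j0 := by
      by_contra hc
      push_neg at hc
      exact hzz (hext z z' hc)
    obtain ⟨j0, hj0, hdne⟩ := hdiff
    have hk : ffun (m - m/2) (m/2) z j0 < m := (hGf z).flt j0 hj0
    obtain ⟨j', hj', hfj'⟩ := (hGf z').fsurj _ hk
    have hnej : j0 ≠ j' := by
      rintro rfl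
      exact hdne hfj'.symm
    have hparj : j0 % 2 = j' % 2 := by
      have e1 := (hGf z).fpar j0 hj0
      have e2 := (hGf z').fpar j' hj'
      omega
    show SepWalks 2 _ _
    rcases Nat.lt_or_ge (j0+1) m with hc | hc
    · obtain ⟨x, y, w, hw1, hw2, hw3, hw4⟩ :=
        exists_cert_walk (hGf z) (hGf z') j0 j' hj0 hc hj' hnej hparj hfj'
      exact ⟨x, y, w, hw1, hw2, Or.inl ⟨hw3, hw4⟩⟩
    · have h0' : j' + 1 < m := by omega
      obtain ⟨x, y, w, hw1, hw2, hw3, hw4⟩ :=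
        exists_cert_walk (hGf z') (hGf z) j' j0 hj' h0' hj0 (Ne.symm hnej) hparj.symm hfj'.symm
      exact ⟨x, y, w, hw1, hw2, Or.inr ⟨hw3, hw4⟩⟩
  · have hcard : (Set.range Φ).ncard = (m - m/2).factorial * (m/2).factorial := by
      rw [← Set.image_univ, Set.ncard_image_of_injective _ hΦinj, Set.ncard_univ]
      simp [Nat.card_eq_fintype_card, Fintype.card_prod, Fintype.card_perm, Fintype.card_fin]
    rw [hcard]
    have hqm : m/2 ≤ m := by omega
    have hch : m.choose (m/2) * (m/2).factorial * (m - m/2).factorial = m.factorial :=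
      Nat.choose_mul_factorial_mul_factorial hqm
    have hle : m.choose (m/2) ≤ 2^m := by
      calc m.choose (m/2) ≤ ∑ i ∈ Finset.range (m+1), m.choose i :=
            Finset.single_le_sum (fun i _ => Nat.zero_le _) (Finset.mem_range.2 (by omega))
        _ = 2^m := Nat.sum_range_choose m
    have hnat : m.factorial ≤ ((m - m/2).factorial * (m/2).factorial) * 2^m := by
      calc m.factorial = m.choose (m/2) * (m/2).factorial * (m - m/2).factorial := hch.symm
        _ ≤ 2^m * (m/2).factorial * (m - m/2).factorial :=
            Nat.mul_le_mul_right _ (Nat.mul_le_mul_right _ hle)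
        _ = ((m - m/2).factorial * (m/2).factorial) * 2^m := by ring
    rw [div_le_iff₀ (by positivity)]
    exact_mod_cast hnat
end

section
/- For every integer n ≥ 3, any family F of Hamiltonian paths in the complete graph on the vertex set {1,...,n} such that for any two distinct paths P, Q in F there is a path of 2 edges which is a subpath of one of P, Q and shares no edge with the other, satisfies |F| ≤ 2^{⌈n/2⌉}·⌈n/2⌉!. -/
open SimpleGraph

namespace HamSep

/-- generic: i-th edge of a walk. -/
lemma walk_edges_getElem {V : Type*} {G : SimpleGraph V} {u v : V} (p : G.Walk u v)
    (i : ℕ) (h : i < p.edges.length) :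
    p.edges[i] = s(p.support[i]'(by simp [Walk.length_support, Walk.length_edges] at h ⊢; omega),
                   p.support[i+1]'(by simp [Walk.length_support, Walk.length_edges] at h ⊢; omega)) := by
  have hd : i < p.darts.length := by rwa [Walk.length_darts, ← Walk.length_edges]
  have hs : i < p.support.length := by
    simp only [Walk.length_support]; rw [Walk.length_edges] at h; omega
  have hs1 : i + 1 < p.support.length := by
    simp only [Walk.length_support]; rw [Walk.length_edges] at h; omega
  have hdl : i < p.support.dropLast.length := by
    rwa [List.length_dropLast, Walk.length_support, Nat.add_sub_cancel, ← Walk.length_darts]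
  have htl : i < p.support.tail.length := by
    rw [List.length_tail, Walk.length_support, Nat.add_sub_cancel, ← Walk.length_darts]; exact hd
  have h1 : (p.darts[i]).toProd.1 = p.support[i]'hs := by
    have := congrArg (fun l => l[i]?) (Walk.map_fst_darts p)
    simp only [List.getElem?_map] at this
    rw [List.getElem?_eq_getElem hd, List.getElem?_eq_getElem hdl] at this
    simp only [Option.map_some, Option.some.injEq] at this
    rw [this, List.getElem_dropLast]
  have h2 : (p.darts[i]).toProd.2 = p.support[i+1]'hs1 := by
    have := congrArg (fun l => l[i]?) (Walk.map_snd_darts p)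
    simp only [List.getElem?_map] at this
    rw [List.getElem?_eq_getElem hd, List.getElem?_eq_getElem htl] at this
    simp only [Option.map_some, Option.some.injEq] at this
    rw [this, List.getElem_tail]
  have he : p.edges[i] = (p.darts[i]).edge := by
    simp [Walk.edges]
  rw [he, SimpleGraph.Dart.edge]
  rw [h1, h2]

end HamSep

namespace HamSep2
open HamSep

lemma walk_edge_mem_iff {V : Type*} {G : SimpleGraph V} {u v : V} (p : G.Walk u v)
    (e : Sym2 V) :
    e ∈ p.edges ↔ ∃ i, ∃ h : i + 1 < p.support.length,
      e = s(p.support[i]'(by omega), p.support[i+1]'h) := by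
  constructor
  · intro he
    obtain ⟨i, hi, hei⟩ := List.mem_iff_getElem.1 he
    refine ⟨i, by rw [Walk.length_support]; rw [Walk.length_edges] at hi; omega, ?_⟩
    rw [← hei, walk_edges_getElem p i hi]
  · rintro ⟨i, h, rfl⟩
    have hi : i < p.edges.length := by
      rw [Walk.length_edges]; rw [Walk.length_support] at h; omega
    rw [← walk_edges_getElem p i hi]
    exact List.getElem_mem hi

end HamSep2

namespace HamSep3
open HamSep HamSep2

variable {n : ℕ}

def sup (P : HamPath n) : List (Fin n) := P.walk.support

lemma len_sup (P : HamPath n) : (sup P).length = n := by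
  have h1 : (sup P).length = P.walk.length + 1 := Walk.length_support _
  have h2 : P.walk.length = Fintype.card (Fin n) - 1 := P.isHamiltonian.length_eq
  have h3 : 1 ≤ n := P.first.pos
  rw [h1, h2, Fintype.card_fin]; omega

lemma nodup_sup (P : HamPath n) : (sup P).Nodup := P.isHamiltonian.isPath.support_nodup

lemma mem_sup (P : HamPath n) (v : Fin n) : v ∈ sup P := P.isHamiltonian.mem_support v

def idx (P : HamPath n) (v : Fin n) : ℕ := (sup P).idxOf v

lemma idx_lt (P : HamPath n) (v : Fin n) : idx P v < n := by
  have h := List.idxOf_lt_length_iff.2 (mem_sup P v)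
  rwa [len_sup] at h

lemma sup_idx (P : HamPath n) (v : Fin n) :
    (sup P)[idx P v]'(by rw [len_sup]; exact idx_lt P v) = v :=
  List.getElem_idxOf _

lemma idx_sup (P : HamPath n) (j : ℕ) (h : j < n) :
    idx P ((sup P)[j]'(by rwa [len_sup])) = j := by
  have := List.get_idxOf (nodup_sup P) ⟨j, by rwa [len_sup]⟩
  simpa [idx, List.get_eq_getElem] using this

lemma sup_inj (P : HamPath n) {i j : ℕ} (hi : i < n) (hj : j < n)
    (h : (sup P)[i]'(by rwa [len_sup]) = (sup P)[j]'(by rwa [len_sup])) : i = j := by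
  have := (nodup_sup P).getElem_inj_iff.1 h
  exact this

end HamSep3

namespace HamSep4
open HamSep HamSep2 HamSep3

variable {n : ℕ}

def pairIdx (n k : ℕ) : ℕ := if k % 2 = 1 then k - 1 else if k + 1 < n then k + 1 else k

lemma pairIdx_lt {k : ℕ} (hk : k < n) : pairIdx n k < n := by
  unfold pairIdx; split_ifs <;> omega

lemma pairIdx_pairIdx {k : ℕ} (hk : k < n) : pairIdx n (pairIdx n k) = k := by
  unfold pairIdx; split_ifs <;> omega

lemma sup_getElem_eq_iff (P : HamPath n) (v : Fin n) {j : ℕ} (hj : j < n) :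
    (sup P)[j]'(by rwa [len_sup]) = v ↔ j = idx P v := by
  constructor
  · intro h
    rw [← h]
    exact (idx_sup P j hj).symm
  · intro h
    subst h
    exact sup_idx P v

def pf (P : HamPath n) (v : Fin n) : Fin n :=
  (sup P)[pairIdx n (idx P v)]'(by rw [len_sup]; exact pairIdx_lt (idx_lt P v))

lemma idx_pf (P : HamPath n) (v : Fin n) : idx P (pf P v) = pairIdx n (idx P v) :=
  idx_sup P _ (pairIdx_lt (idx_lt P v))

lemma pf_eq_iff (P : HamPath n) (v w : Fin n) : pf P v = w ↔ pairIdx n (idx P v) = idx P w :=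
  sup_getElem_eq_iff P w (pairIdx_lt (idx_lt P v))

lemma pf_invol (P : HamPath n) : Function.Involutive (pf P) := by
  intro v
  rw [pf_eq_iff, idx_pf]
  exact pairIdx_pairIdx (idx_lt P v)

lemma pf_fixed_iff (P : HamPath n) (v : Fin n) (hn : 1 ≤ n) :
    pf P v = v ↔ (n % 2 = 1 ∧ v = (sup P)[n-1]'(by rw [len_sup]; omega)) := by
  rw [pf_eq_iff]
  have hlt := idx_lt P v
  constructor
  · intro h
    have hi : idx P v = n - 1 ∧ n % 2 = 1 := by
      unfold pairIdx at h; split_ifs at h <;> omega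
    exact ⟨hi.2, ((sup_getElem_eq_iff P v (by omega)).2 hi.1.symm).symm⟩
  · rintro ⟨hodd, rfl⟩
    have h : idx P ((sup P)[n-1]'(by rw [len_sup]; omega)) = n - 1 := idx_sup P _ (by omega)
    rw [h]
    unfold pairIdx
    split_ifs <;> omega

/-- the pair edge `{v, pf v}` is an edge of the walk. -/
lemma pairEdge_mem (P : HamPath n) (v : Fin n) (hv : pf P v ≠ v) :
    s(v, pf P v) ∈ P.walk.edges := by
  rw [walk_edge_mem_iff]
  have hlt := idx_lt P v
  have hplt : pairIdx n (idx P v) < n := pairIdx_lt hlt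
  have hne : pairIdx n (idx P v) ≠ idx P v := fun h => hv ((pf_eq_iff P v v).2 h)
  have hls : P.walk.support.length = n := len_sup P
  rcases Nat.lt_or_ge (idx P v) (pairIdx n (idx P v)) with hc | hc
  · have hpi : pairIdx n (idx P v) = idx P v + 1 := by
      unfold pairIdx at hne hc ⊢; split_ifs at hne hc ⊢ <;> omega
    refine ⟨idx P v, by omega, ?_⟩
    have h1 : P.walk.support[idx P v]'(by omega) = v := sup_idx P v
    have h2 : P.walk.support[idx P v + 1]'(by omega) = pf P v :=
      (sup_getElem_eq_iff P (pf P v) (by omega)).2 (by rw [idx_pf, hpi])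
    rw [h1, h2]
  · have hpi : pairIdx n (idx P v) = idx P v - 1 ∧ 1 ≤ idx P v := by
      unfold pairIdx at hne hc ⊢; split_ifs at hne hc ⊢ <;> omega
    refine ⟨idx P v - 1, by omega, ?_⟩
    have h1 : P.walk.support[idx P v - 1]'(by omega) = pf P v :=
      (sup_getElem_eq_iff P (pf P v) (by omega)).2 (by rw [idx_pf, hpi.1])
    have h2 : P.walk.support[idx P v - 1 + 1]'(by omega) = v :=
      (sup_getElem_eq_iff P v (by omega)).2 (by omega)
    rw [h1, h2, Sym2.eq_swap]

end HamSep4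

namespace HamSep5
open HamSep HamSep2 HamSep3 HamSep4

variable {n : ℕ}

lemma even_edge_mem (P Q : HamPath n) (hpq : pf P = pf Q) (t : ℕ) (ht2 : t % 2 = 0)
    (ht : t + 1 < n) :
    s((sup P)[t]'(by rw [len_sup]; omega), (sup P)[t+1]'(by rwa [len_sup])) ∈ Q.walk.edges := by
  set v : Fin n := (sup P)[t]'(by rw [len_sup]; omega) with hv
  have hidx : idx P v = t := idx_sup P t (by omega)
  have hpair : pairIdx n t = t + 1 := by unfold pairIdx; split_ifs <;> omega
  have hpf : (sup P)[t+1]'(by rwa [len_sup]) = pf P v :=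
    (sup_getElem_eq_iff P (pf P v) ht).2 (by rw [idx_pf, hidx, hpair])
  have hne : pf P v ≠ v := by
    intro h
    have h2 := congrArg (idx P) h
    rw [idx_pf, hidx, hpair] at h2
    omega
  rw [hpf, congrFun hpq v]
  exact pairEdge_mem Q v (by rw [← congrFun hpq v]; exact hne)

lemma exists_common_edge (P Q : HamPath n) (hpq : pf P = pf Q) {x y : Fin n}
    (w : (⊤ : SimpleGraph (Fin n)).Walk x y) (hw : w.IsPath) (hl : w.length = 2)
    (hsub : ∀ e ∈ w.edges, e ∈ P.walk.edges) :
    ∃ e ∈ w.edges, e ∈ Q.walk.edges := by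
  have hws : w.support.length = 3 := by rw [Walk.length_support, hl]
  have hwe : w.edges.length = 2 := by rw [Walk.length_edges, hl]
  have hnd : w.support.Nodup := hw.support_nodup
  have he1 : w.edges[0]'(by omega) = s(w.support[0]'(by omega), w.support[1]'(by omega)) :=
    walk_edges_getElem w 0 (by omega)
  have he2 : w.edges[1]'(by omega) = s(w.support[1]'(by omega), w.support[2]'(by omega)) :=
    walk_edges_getElem w 1 (by omega)
  have hm1 : w.edges[0]'(by omega) ∈ w.edges := List.getElem_mem _
  have hm2 : w.edges[1]'(by omega) ∈ w.edges := List.getElem_mem _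
  set z : Fin n := w.support[1]'(by omega) with hz
  -- locate both edges inside P
  obtain ⟨i, hi, hei⟩ := (walk_edge_mem_iff P.walk _).1 (hsub _ hm1)
  obtain ⟨j, hj, hej⟩ := (walk_edge_mem_iff P.walk _).1 (hsub _ hm2)
  have hlsup : P.walk.support.length = n := by have := len_sup P; unfold sup at this; omega
  rw [hlsup] at hi hj
  rw [he1] at hei
  rw [he2] at hej
  -- z belongs to both edges
  have hz1 : z = P.walk.support[i]'(by omega)
      ∨ z = P.walk.support[i+1]'(by omega) := by
    have : z ∈ s(P.walk.support[i]'(by omega),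
        P.walk.support[i+1]'(by omega)) := by
      rw [← hei]; exact Sym2.mem_mk_right _ _
    exact Sym2.mem_iff.1 this
  have hz2 : z = P.walk.support[j]'(by omega)
      ∨ z = P.walk.support[j+1]'(by omega) := by
    have : z ∈ s(P.walk.support[j]'(by omega),
        P.walk.support[j+1]'(by omega)) := by
      rw [← hej]; exact Sym2.mem_mk_left _ _
    exact Sym2.mem_iff.1 this
  have hik : i = idx P z ∨ i + 1 = idx P z := by
    rcases hz1 with h | h
    · exact Or.inl ((sup_getElem_eq_iff P z (by omega)).1 h.symm)
    · exact Or.inr ((sup_getElem_eq_iff P z (by omega)).1 h.symm)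
  have hjk : j = idx P z ∨ j + 1 = idx P z := by
    rcases hz2 with h | h
    · exact Or.inl ((sup_getElem_eq_iff P z (by omega)).1 h.symm)
    · exact Or.inr ((sup_getElem_eq_iff P z (by omega)).1 h.symm)
  have hij : i ≠ j := by
    intro h
    subst h
    have heq := hei.trans hej.symm
    have h02 : w.support[0]'(by omega) ≠ w.support[2]'(by omega) := by
      intro h; exact absurd (hnd.getElem_inj_iff.1 h) (by omega)
    have h01 : w.support[0]'(by omega) ≠ w.support[1]'(by omega) := by
      intro h; exact absurd (hnd.getElem_inj_iff.1 h) (by omega)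
    rw [Sym2.eq_iff] at heq
    rcases heq with ⟨ha, hb⟩ | ⟨ha, hb⟩
    · exact h01 ha
    · exact h02 ha
  -- among i and j one is even; the corresponding edge is a pair edge of P, hence in Q
  have hcases : (i % 2 = 0 ∧ (j = i + 1 ∨ j + 1 = i)) ∨ (j % 2 = 0 ∧ (i = j + 1 ∨ i + 1 = j)) := by
    rcases hik with h1 | h1 <;> rcases hjk with h2 | h2 <;> omega
  rcases hcases with ⟨hev, _⟩ | ⟨hev, _⟩
  · exact ⟨_, hm1, by rw [he1, hei]; exact even_edge_mem P Q hpq i hev (by omega)⟩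
  · exact ⟨_, hm2, by rw [he2, hej]; exact even_edge_mem P Q hpq j hev (by omega)⟩

lemma not_sep (P Q : HamPath n) (hpq : pf P = pf Q) : ¬ SepHam 2 P Q := by
  rintro ⟨x, y, w, hw, hl, h | h⟩
  · obtain ⟨e, hew, heQ⟩ := exists_common_edge P Q hpq w hw hl h.1
    exact h.2 e hew heQ
  · obtain ⟨e, hew, heP⟩ := exists_common_edge Q P hpq.symm w hw hl h.1
    exact h.2 e hew heP

end HamSep5

namespace HamSep6

variable {n : ℕ}

def Rset (f : Fin n → Fin n) : ℕ → Finset (Fin n)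
  | 0 => Finset.univ.filter (fun x => f x ≠ x)
  | (i+1) => (Rset f i).min.elim (Rset f i) (fun a => ((Rset f i).erase a).erase (f a))

def rkN (f : Fin n → Fin n) (i : ℕ) : ℕ :=
  (Rset f i).min.elim 0 (fun a => ((Rset f i).sort (· ≤ ·)).idxOf (f a))

lemma Rset_succ_subset (f : Fin n → Fin n) (i : ℕ) : Rset f (i+1) ⊆ Rset f i := by
  rcases hm : (Rset f i).min with _ | a
  · simp [Rset, hm]
  · simp only [Rset, hm, Option.elim]
    exact (Finset.erase_subset _ _).trans (Finset.erase_subset _ _)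

lemma Rset_subset_zero (f : Fin n → Fin n) (i : ℕ) : Rset f i ⊆ Rset f 0 := by
  induction i with
  | zero => exact subset_rfl
  | succ i ih => exact (Rset_succ_subset f i).trans ih

lemma ne_of_mem_Rset {f : Fin n → Fin n} {i : ℕ} {x : Fin n} (hx : x ∈ Rset f i) : f x ≠ x := by
  have := Rset_subset_zero f i hx
  simpa [Rset] using this

lemma mem_Rset_of_mem {f : Fin n → Fin n} (hf : Function.Involutive f) {i : ℕ} {x : Fin n}
    (hx : x ∈ Rset f i) : f x ∈ Rset f i := by
  induction i with
  | zero =>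
    simp only [Rset, Finset.mem_filter, Finset.mem_univ, true_and] at hx ⊢
    rw [hf x]
    exact fun h => hx h.symm
  | succ i ih =>
    rcases hm : (Rset f i).min with _ | a
    · simp only [Rset, hm, Option.elim] at hx ⊢
      exact ih hx
    · simp only [Rset, hm, Option.elim, Finset.mem_erase] at hx ⊢
      obtain ⟨hxfa, hxa, hxR⟩ := hx
      refine ⟨?_, ?_, ih hxR⟩
      · intro h; exact hxa (by rw [← hf x, h, hf])
      · intro h; exact hxfa (by rw [← h, hf])

lemma Rset_card_succ {f : Fin n → Fin n} (hf : Function.Involutive f) {i : ℕ}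
    (h : (Rset f i).Nonempty) : (Rset f (i+1)).card + 2 = (Rset f i).card := by
  obtain ⟨a, hm⟩ := Finset.min_of_nonempty h
  have haR : a ∈ Rset f i := Finset.mem_of_min hm
  have hfaR : f a ∈ Rset f i := mem_Rset_of_mem hf haR
  have hfa : f a ≠ a := ne_of_mem_Rset haR
  have h2 : f a ∈ (Rset f i).erase a := Finset.mem_erase.2 ⟨hfa, hfaR⟩
  have hcard : 1 ≤ ((Rset f i).erase a).card := Finset.card_pos.2 ⟨f a, h2⟩
  have hcard2 : 1 ≤ (Rset f i).card := Finset.card_pos.2 h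
  have h3 : (((Rset f i).erase a).erase (f a)).card = ((Rset f i).erase a).card - 1 :=
    Finset.card_erase_of_mem h2
  have h4 : ((Rset f i).erase a).card = (Rset f i).card - 1 :=
    Finset.card_erase_of_mem haR
  simp only [Rset, hm, Option.elim]
  omega

lemma Rset_card {f : Fin n → Fin n} (hf : Function.Involutive f) {M : ℕ}
    (h0 : (Rset f 0).card = 2*M) : ∀ i, i ≤ M → (Rset f i).card = 2*(M-i) := by
  intro i
  induction i with
  | zero => intro _; simpa using h0
  | succ i ih =>
    intro hi
    have hc := ih (by omega)
    have hne : (Rset f i).Nonempty := Finset.card_pos.1 (by omega)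
    have := Rset_card_succ hf hne
    omega

lemma Rset_empty {f : Fin n → Fin n} (hf : Function.Involutive f) {M : ℕ}
    (h0 : (Rset f 0).card = 2*M) : ∀ i, M ≤ i → Rset f i = ∅ := by
  have hM : (Rset f M).card = 0 := by
    have := Rset_card hf h0 M le_rfl
    omega
  intro i hi
  induction i with
  | zero =>
    have : M = 0 := by omega
    subst this
    exact Finset.card_eq_zero.1 hM
  | succ i ih =>
    rcases Nat.lt_or_ge M (i+1) with h | h
    · have hRi : Rset f i = ∅ := ih (by omega)
      have hm : (Rset f i).min = none := by rw [hRi]; rfl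
      simp [Rset, hm, Option.elim, hRi]
    · have : M = i + 1 := by omega
      subst this
      exact Finset.card_eq_zero.1 hM

lemma rkN_lt {f : Fin n → Fin n} (hf : Function.Involutive f) {i : ℕ}
    (h : (Rset f i).Nonempty) : rkN f i < (Rset f i).card := by
  obtain ⟨a, hm⟩ := Finset.min_of_nonempty h
  have haR : a ∈ Rset f i := Finset.mem_of_min hm
  have hfaR : f a ∈ Rset f i := mem_Rset_of_mem hf haR
  simp only [rkN, hm, Option.elim]
  rw [← Finset.length_sort (α := Fin n) (· ≤ ·) (s := Rset f i)]
  exact List.idxOf_lt_length_iff.2 ((Finset.mem_sort _).2 hfaR)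

lemma encode_inj {f g : Fin n → Fin n} (hf : Function.Involutive f)
    (hg : Function.Involutive g) (h0 : Rset f 0 = Rset g 0)
    (hrk : ∀ i, rkN f i = rkN g i) : f = g := by
  have key : ∀ i, Rset f i = Rset g i ∧ ∀ x ∈ Rset f 0, x ∉ Rset f i → f x = g x := by
    intro i
    induction i with
    | zero => exact ⟨h0, fun x hx hnx => absurd hx hnx⟩
    | succ i ih =>
      obtain ⟨hR, hA⟩ := ih
      rcases hm : (Rset f i).min with _ | a
      · have hmg : (Rset g i).min = none := by rw [← hR]; exact hm
        constructor
        · simp [Rset, hm, hmg, Option.elim, hR]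
        · intro x hx hnx
          apply hA x hx
          simpa [Rset, hm, Option.elim] using hnx
      · have hmg : (Rset g i).min = some a := by rw [← hR]; exact hm
        have hfa : f a = g a := by
          have h1 := hrk i
          simp only [rkN, hm, hmg, Option.elim, ← hR] at h1
          have haR : a ∈ Rset f i := Finset.mem_of_min hm
          have hfm : f a ∈ (Rset f i).sort (· ≤ ·) :=
            (Finset.mem_sort _).2 (mem_Rset_of_mem hf haR)
          have hgm : g a ∈ (Rset f i).sort (· ≤ ·) :=
            (Finset.mem_sort _).2 (by rw [hR]; exact mem_Rset_of_mem hg (hR ▸ haR))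
          exact (List.idxOf_inj hfm).1 h1
        constructor
        · simp only [Rset, hm, hmg, Option.elim, hR, hfa]
        · intro x hx hnx
          simp only [Rset, hm, Option.elim, Finset.mem_erase] at hnx
          push_neg at hnx
          by_cases hxfa : x = f a
          · rw [hxfa, hf a, hfa, hg a]
          · by_cases hxa : x = a
            · rw [hxa, hfa]
            · exact hA x hx (hnx hxfa hxa)
  have hempty : Rset f ((Rset f 0).card) = ∅ := by
    have hdrop : ∀ i, Rset f i ≠ ∅ → (Rset f i).card + 2 ≤ (Rset f 0).card - 2*i + 2 → True := fun _ _ _ => trivial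
    -- card decreases by 2 each nonempty step
    have hcard : ∀ i, (Rset f i).card + 2 * i ≤ (Rset f 0).card ∨ Rset f i = ∅ := by
      intro i
      induction i with
      | zero => left; omega
      | succ i ih =>
        rcases ih with h | h
        · rcases Finset.eq_empty_or_nonempty (Rset f i) with he | hne
          · right
            have hm : (Rset f i).min = none := by rw [he]; rfl
            simp [Rset, hm, Option.elim, he]
          · have := Rset_card_succ hf hne
            left; omega
        · right
          have hm : (Rset f i).min = none := by rw [h]; rfl
          simp [Rset, hm, Option.elim, h]
    rcases hcard ((Rset f 0).card) with h | h
    · have : (Rset f ((Rset f 0).card)).card = 0 := by omega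
      exact Finset.card_eq_zero.1 this
    · exact h
  funext x
  by_cases hx : x ∈ Rset f 0
  · exact (key ((Rset f 0).card)).2 x hx (by rw [hempty]; exact Finset.notMem_empty x)
  · have hfx : f x = x := by
      by_contra h
      exact hx (by simp [Rset, h])
    have hgx : g x = x := by
      by_contra h
      rw [h0] at hx
      exact hx (by simp [Rset, h])
    rw [hfx, hgx]

end HamSep6

namespace HamSep7
open HamSep HamSep2 HamSep3 HamSep4 HamSep5 HamSep6

variable {n : ℕ}

lemma card_R0 (P : HamPath n) : (Rset (pf P) 0).card = 2 * (n / 2) := by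
  have hn : 1 ≤ n := P.first.pos
  have hsplit := Finset.card_filter_add_card_filter_not
    (s := (Finset.univ : Finset (Fin n))) (p := fun x => pf P x = x)
  have hfixcard : (Finset.univ.filter (fun x => pf P x = x)).card = n % 2 := by
    rcases Nat.mod_two_eq_zero_or_one n with h | h
    · rw [h]
      rw [Finset.card_eq_zero]
      ext x
      simp only [Finset.mem_filter, Finset.mem_univ, true_and, Finset.notMem_empty, iff_false]
      rw [pf_fixed_iff P x hn]
      omega
    · rw [h]
      rw [Finset.card_eq_one]
      refine ⟨(sup P)[n-1]'(by rw [len_sup]; omega), ?_⟩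
      ext x
      simp only [Finset.mem_filter, Finset.mem_univ, true_and, Finset.mem_singleton]
      rw [pf_fixed_iff P x hn]
      constructor
      · exact fun hh => hh.2
      · exact fun hh => ⟨h, hh⟩
  have hR0 : (Rset (pf P) 0).card
      = (Finset.univ.filter (fun x => ¬ (pf P x = x))).card := rfl
  have hcardu : (Finset.univ : Finset (Fin n)).card = n := by simp
  rw [hR0]
  omega

lemma rk_bound (P : HamPath n) (i : ℕ) (hi : i < n / 2) :
    rkN (pf P) i < 2 * (n / 2 - i) := by
  have hc := Rset_card (pf_invol P) (card_R0 P) i (by omega)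
  have hne : (Rset (pf P) i).Nonempty := Finset.card_pos.1 (by omega)
  have := rkN_lt (pf_invol P) hne
  omega

lemma rkN_of_empty (f : Fin n → Fin n) (i : ℕ) (h : Rset f i = ∅) : rkN f i = 0 := by
  have hm : (Rset f i).min = none := by rw [h]; rfl
  simp [rkN, hm, Option.elim]

def Enc (P : HamPath n) : Fin (n ^ (n % 2)) × ((i : Fin (n/2)) → Fin (2 * (n/2 - i.val))) :=
  (⟨if n % 2 = 1 then ((sup P)[n-1]'(by rw [len_sup]; exact Nat.sub_lt P.first.pos one_pos)).val
      else 0,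
    by
      split_ifs with h
      · rw [h, pow_one]; exact Fin.is_lt _
      · have h0 : n % 2 = 0 := by omega
        rw [h0, pow_zero]; omega⟩,
   fun i => ⟨rkN (pf P) i.val, rk_bound P i.val i.isLt⟩)

lemma Enc_inj (P Q : HamPath n) (h : Enc P = Enc Q) : pf P = pf Q := by
  have hn : 1 ≤ n := P.first.pos
  have h1 := congrArg Prod.fst h
  have h2 := congrArg Prod.snd h
  have hc : n % 2 = 1 →
      (sup P)[n-1]'(by rw [len_sup]; omega) = (sup Q)[n-1]'(by rw [len_sup]; omega) := by
    intro hodd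
    have := congrArg Fin.val h1
    simp only [Enc, hodd, if_pos] at this
    exact Fin.val_injective this
  have h0 : Rset (pf P) 0 = Rset (pf Q) 0 := by
    ext x
    simp only [Rset, Finset.mem_filter, Finset.mem_univ, true_and]
    rw [ne_eq, ne_eq, pf_fixed_iff P x hn, pf_fixed_iff Q x hn]
    constructor
    · intro hh hcon
      exact hh ⟨hcon.1, by rw [hcon.2, hc hcon.1]⟩
    · intro hh hcon
      exact hh ⟨hcon.1, by rw [hcon.2, ← hc hcon.1]⟩
  refine encode_inj (pf_invol P) (pf_invol Q) h0 ?_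
  intro i
  rcases Nat.lt_or_ge i (n / 2) with hi | hi
  · have := congrFun h2 ⟨i, hi⟩
    simpa [Enc, Fin.ext_iff] using this
  · rw [rkN_of_empty _ _ (Rset_empty (pf_invol P) (card_R0 P) i hi),
      rkN_of_empty _ _ (Rset_empty (pf_invol Q) (card_R0 Q) i hi)]

lemma prod_formula (m : ℕ) : ∏ i : Fin m, 2 * (m - i.val) = 2 ^ m * m.factorial := by
  rw [Finset.prod_mul_distrib]
  congr 1
  · simp [Finset.prod_const, Finset.card_univ]
  · rw [Fin.prod_univ_eq_prod_range (fun i => m - i) m]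
    rw [← Finset.prod_range_reflect (fun i => m - i) m]
    have : ∀ j ∈ Finset.range m, m - (m - 1 - j) = j + 1 := by
      intro j hj
      rw [Finset.mem_range] at hj
      omega
    rw [Finset.prod_congr rfl this]
    exact Finset.prod_range_add_one_eq_factorial m

end HamSep7

/-- **Theorem 1, upper bound.** For every `n ≥ 3`, every family `F` of Hamiltonian paths
in `K_n` any two distinct members of which are `2`-separated satisfies
`|F| ≤ 2 ^ ⌈n/2⌉ * ⌈n/2⌉!`. -/
theorem hamPath_two_separated_upper_bound (n : ℕ) (hn : 3 ≤ n) (F : Set (HamPath n))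
    (hF : ∀ P ∈ F, ∀ Q ∈ F, P ≠ Q → SepHam 2 P Q) :
    F.ncard ≤ 2 ^ ((n + 1) / 2) * ((n + 1) / 2).factorial := by
  classical
  have hinj : Set.InjOn HamSep7.Enc F := by
    intro P hP Q hQ h
    by_contra hne
    exact HamSep5.not_sep P Q (HamSep7.Enc_inj P Q h) (hF P hP Q hQ hne)
  have h1 : F.ncard = (HamSep7.Enc '' F).ncard := (Set.ncard_image_of_injOn hinj).symm
  have h2 : (HamSep7.Enc '' F).ncard
      ≤ Fintype.card (Fin (n ^ (n % 2)) × ((i : Fin (n/2)) → Fin (2 * (n/2 - i.val)))) := by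
    have := Set.ncard_le_ncard (Set.subset_univ (HamSep7.Enc '' F)) (Set.toFinite _)
    rwa [Set.ncard_univ, Nat.card_eq_fintype_card] at this
  have h3 : Fintype.card (Fin (n ^ (n % 2)) × ((i : Fin (n/2)) → Fin (2 * (n/2 - i.val))))
      = n ^ (n % 2) * (2 ^ (n/2) * (n/2).factorial) := by
    rw [Fintype.card_prod, Fintype.card_fin, Fintype.card_pi]
    congr 1
    simp only [Fintype.card_fin]
    exact HamSep7.prod_formula (n/2)
  have h4 : n ^ (n % 2) * (2 ^ (n/2) * (n/2).factorial)
      ≤ 2 ^ ((n + 1) / 2) * ((n + 1) / 2).factorial := by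
    rcases Nat.mod_two_eq_zero_or_one n with h | h
    · have he : (n+1)/2 = n/2 := by omega
      rw [h, pow_zero, one_mul, he]
    · have he : (n+1)/2 = n/2 + 1 := by omega
      rw [h, pow_one, he]
      calc n * (2 ^ (n/2) * (n/2).factorial)
          ≤ (2 * (n/2 + 1)) * (2 ^ (n/2) * (n/2).factorial) :=
            Nat.mul_le_mul_right _ (by omega)
        _ = 2 ^ (n/2 + 1) * (n/2 + 1).factorial := by
            rw [Nat.factorial_succ, pow_succ]; ring
  omega
end

section
/- Let k > 2 be an even integer and let n be a positive multiple of k. Then there exists a family F of Hamiltonian paths in the complete graph on the vertex set {1,...,n} with |F| ≥ (n/k)! such that for any two distinct paths P, Q in F there is a path of k edges (on k+1 vertices) which is a subpath of one of P, Q and shares no edge with the other. -/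
open SimpleGraph

set_option maxHeartbeats 1000000

namespace SepLB

variable {n : ℕ}

/-- Walk in the complete graph visiting `f 0, f 1, ..., f len`. -/
def walkOfFn (f : ℕ → Fin n) : ∀ len : ℕ, (∀ t, t < len → f t ≠ f (t+1)) →
    (⊤ : SimpleGraph (Fin n)).Walk (f 0) (f len)
  | 0, _ => .nil
  | (l+1), hf =>
    (walkOfFn f l (fun t ht => hf t (Nat.lt_succ_of_lt ht))).concat
      ((SimpleGraph.top_adj _ _).mpr (hf l (Nat.lt_succ_self l)))

@[simp] lemma length_walkOfFn (f : ℕ → Fin n) (len : ℕ) (hf) :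
    (walkOfFn f len hf).length = len := by
  induction len with
  | zero => rfl
  | succ l ih => simp [walkOfFn, Walk.length_concat, ih]

lemma support_walkOfFn (f : ℕ → Fin n) (len : ℕ) (hf) :
    (walkOfFn f len hf).support = (List.range (len+1)).map f := by
  induction len with
  | zero => simp [walkOfFn, List.range_succ]
  | succ l ih => simp [walkOfFn, Walk.support_concat, ih, List.range_succ]

lemma edges_walkOfFn (f : ℕ → Fin n) (len : ℕ) (hf) :
    (walkOfFn f len hf).edges = (List.range len).map (fun t => s(f t, f (t+1))) := by
  induction len with
  | zero => simp [walkOfFn]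
  | succ l ih => simp [walkOfFn, Walk.edges_concat, ih, List.range_succ]

lemma mem_edges_walkOfFn (f : ℕ → Fin n) (len : ℕ) (hf) (e : Sym2 (Fin n)) :
    e ∈ (walkOfFn f len hf).edges ↔ ∃ t, t < len ∧ e = s(f t, f (t+1)) := by
  simp [edges_walkOfFn, eq_comm]


/-- vertex code of the `r`-th vertex of block `b` (block size `2*h`). -/
def code (h b r : ℕ) : ℕ := b * (2*h) + r

lemma code_lt {m h b r : ℕ} (hb : b < m) (hr : r < 2*h) : code h b r < m * (2*h) := by
  have : b * (2*h) + r < (b+1) * (2*h) := by simp [Nat.add_mul]; omega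
  have h2 : (b+1) * (2*h) ≤ m * (2*h) := Nat.mul_le_mul_right _ hb
  unfold code; omega

lemma code_inj {h b r b' r' : ℕ} (hr : r < 2*h) (hr' : r' < 2*h)
    (hc : code h b r = code h b' r') : b = b' ∧ r = r' := by
  unfold code at hc
  have h0 : 0 < 2*h := by omega
  have e1 : (b * (2*h) + r) / (2*h) = b := by
    rw [Nat.mul_comm b, Nat.mul_add_div h0, Nat.div_eq_of_lt hr]; omega
  have e2 : (b' * (2*h) + r') / (2*h) = b' := by
    rw [Nat.mul_comm b', Nat.mul_add_div h0, Nat.div_eq_of_lt hr']; omega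
  have hb : b = b' := by rw [← e1, ← e2, hc]
  refine ⟨hb, ?_⟩
  subst hb
  omega

/-- The label of the block in position `i` under permutation `σ`. -/
def bl {m : ℕ} (σ : Equiv.Perm (Fin m)) (i : ℕ) : ℕ :=
  if hi : i < m then (σ ⟨i, hi⟩ : ℕ) else 0

lemma bl_lt {m : ℕ} (hm : 0 < m) (σ : Equiv.Perm (Fin m)) (i : ℕ) : bl σ i < m := by
  unfold bl; split
  · exact (σ _).isLt
  · exact hm

lemma bl_inj {m : ℕ} (σ : Equiv.Perm (Fin m)) {i j : ℕ} (hi : i < m) (hj : j < m)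
    (hb : bl σ i = bl σ j) : i = j := by
  unfold bl at hb
  rw [dif_pos hi, dif_pos hj] at hb
  have := σ.injective (Fin.val_injective hb)
  exact congrArg Fin.val this

/-- Position `t` ↦ vertex code of the Hamiltonian path `P_σ`. -/
def vf (m h : ℕ) (σ : Equiv.Perm (Fin m)) (t : ℕ) : ℕ :=
  if t < h then code h (bl σ 0) t
  else if t < m*(2*h) - h then
    (if (t - h) % (2*h) % 2 = 0 then code h (bl σ ((t-h)/(2*h) + 1)) ((t-h) % (2*h) / 2)
     else code h (bl σ ((t-h)/(2*h))) (h + (t-h) % (2*h) / 2))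
  else code h (bl σ (m-1)) (h + (t - (m*(2*h) - h)))

lemma vf_head {m h : ℕ} (σ : Equiv.Perm (Fin m)) {t : ℕ} (ht : t < h) :
    vf m h σ t = code h (bl σ 0) t := if_pos ht

lemma vf_bridge {m h : ℕ} (σ : Equiv.Perm (Fin m)) {q j : ℕ} (hh : 0 < h)
    (hq : q + 1 < m) (hj : j < 2*h) :
    vf m h σ (h + (2*h)*q + j) =
      if j % 2 = 0 then code h (bl σ (q+1)) (j/2) else code h (bl σ q) (h + j/2) := by
  have h0 : 0 < 2*h := by omega
  have hs : (h + (2*h)*q + j) - h = (2*h)*q + j := by omega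
  have hdiv : ((2*h)*q + j) / (2*h) = q := by
    rw [Nat.mul_add_div h0, Nat.div_eq_of_lt hj]; omega
  have hmod : ((2*h)*q + j) % (2*h) = j := by
    rw [Nat.mul_add_mod, Nat.mod_eq_of_lt hj]
  have hlt : h + (2*h)*q + j < m*(2*h) - h := by
    have e1 : (2*h)*q + 2*h = (q+1)*(2*h) := by ring
    have e2 : (q+1)*(2*h) ≤ (m-1)*(2*h) := Nat.mul_le_mul_right _ (by omega)
    have e3 : (m-1)*(2*h) = m*(2*h) - 2*h := by rw [Nat.sub_mul, one_mul]
    have e4 : 2*h + 2*h ≤ m*(2*h) := by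
      calc 2*h + 2*h = 2*(2*h) := by ring
      _ ≤ m*(2*h) := Nat.mul_le_mul_right _ (by omega)
    omega
  have hnh : ¬ (h + (2*h)*q + j < h) := by omega
  unfold vf
  rw [if_neg hnh, if_pos hlt, hs, hdiv, hmod]

lemma vf_tail {m h : ℕ} (σ : Equiv.Perm (Fin m)) {j : ℕ} (hm : 0 < m) (hh : 0 < h)
    (hj : j < h) :
    vf m h σ (m*(2*h) - h + j) = code h (bl σ (m-1)) (h + j) := by
  have h1 : 2*h ≤ m * (2*h) := by
    have := Nat.mul_le_mul_right (2*h) hm; omega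
  have hnh : ¬ (m*(2*h) - h + j < h) := by omega
  have hn2 : ¬ (m*(2*h) - h + j < m*(2*h) - h) := by omega
  unfold vf
  rw [if_neg hnh, if_neg hn2]
  have e : m*(2*h) - h + j - (m*(2*h) - h) = j := by omega
  rw [e]

/-- Division of positions into regimes. -/
lemma t_cases {m h t : ℕ} (hm : 0 < m) (hh : 0 < h) (ht : t < m*(2*h)) :
    t < h ∨ (∃ q j, q + 1 < m ∧ j < 2*h ∧ t = h + (2*h)*q + j) ∨
      (∃ j, j < h ∧ t = m*(2*h) - h + j) := by
  by_cases h1 : t < h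
  · exact Or.inl h1
  by_cases h2 : t < m*(2*h) - h
  · refine Or.inr (Or.inl ⟨(t-h)/(2*h), (t-h) % (2*h), ?_, ?_, ?_⟩)
    · have e3 : (m-1)*(2*h) = m*(2*h) - 2*h := by rw [Nat.sub_mul, one_mul]
      have hlt : t - h < (m-1)*(2*h) := by omega
      have := (Nat.div_lt_iff_lt_mul (by omega : 0 < 2*h)).mpr hlt
      omega
    · exact Nat.mod_lt _ (by omega)
    · have := Nat.div_add_mod (t-h) (2*h); omega
  · exact Or.inr (Or.inr ⟨t - (m*(2*h) - h), by omega, by omega⟩)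

lemma vf_lt {m h : ℕ} (σ : Equiv.Perm (Fin m)) {t : ℕ} (hm : 0 < m) (hh : 0 < h)
    (ht : t < m*(2*h)) : vf m h σ t < m * (2*h) := by
  rcases t_cases hm hh ht with h1 | ⟨q, j, hq, hj, rfl⟩ | ⟨j, hj, rfl⟩
  · rw [vf_head σ h1]; exact code_lt (bl_lt hm σ 0) (by omega)
  · rw [vf_bridge σ hh hq hj]
    split
    · exact code_lt (bl_lt hm σ _) (by omega)
    · exact code_lt (bl_lt hm σ _) (by omega)
  · rw [vf_tail σ hm hh hj]; exact code_lt (bl_lt hm σ _) (by omega)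



lemma code_div {h b r : ℕ} (hh : 0 < h) (hr : r < 2*h) : code h b r / (2*h) = b := by
  unfold code
  rw [Nat.mul_comm b, Nat.mul_add_div (by omega), Nat.div_eq_of_lt hr]; omega

lemma code_mod {h b r : ℕ} (hr : r < 2*h) : code h b r % (2*h) = r := by
  unfold code
  rw [Nat.mul_comm b, Nat.mul_add_mod, Nat.mod_eq_of_lt hr]

/-- Left inverse of `vf`. -/
def gf (m h : ℕ) (σ : Equiv.Perm (Fin m)) (c : ℕ) : ℕ :=
  let b := c / (2*h)
  let r := c % (2*h)
  let u := if hb : b < m then ((σ.symm ⟨b, hb⟩ : Fin m) : ℕ) else 0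
  if r < h then (if u = 0 then r else h + (2*h)*(u-1) + 2*r)
  else (if u = m-1 then m*(2*h) - h + (r - h) else h + (2*h)*u + (2*(r-h) + 1))

lemma gf_code {m h : ℕ} (σ : Equiv.Perm (Fin m)) (hh : 0 < h) {i r : ℕ}
    (hi : i < m) (hr : r < 2*h) :
    gf m h σ (code h (bl σ i) r) =
      if r < h then (if i = 0 then r else h + (2*h)*(i-1) + 2*r)
      else (if i = m-1 then m*(2*h) - h + (r - h) else h + (2*h)*i + (2*(r-h) + 1)) := by
  have hb : bl σ i < m := by unfold bl; rw [dif_pos hi]; exact (σ _).isLt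
  have hu : (if hb' : code h (bl σ i) r / (2*h) < m
      then ((σ.symm ⟨code h (bl σ i) r / (2*h), hb'⟩ : Fin m) : ℕ) else 0) = i := by
    rw [dif_pos (by rw [code_div hh hr]; exact hb)]
    have : (⟨code h (bl σ i) r / (2*h), by rw [code_div hh hr]; exact hb⟩ : Fin m)
        = σ ⟨i, hi⟩ := by
      apply Fin.val_injective
      simp [code_div hh hr]
      unfold bl
      rw [dif_pos hi]
    rw [this, Equiv.symm_apply_apply]
  unfold gf
  simp only [code_mod hr, hu]



lemma gf_vf {m h : ℕ} (σ : Equiv.Perm (Fin m)) (hm : 0 < m) (hh : 0 < h) {t : ℕ}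
    (ht : t < m*(2*h)) : gf m h σ (vf m h σ t) = t := by
  rcases t_cases hm hh ht with h1 | ⟨q, j, hq, hj, rfl⟩ | ⟨j, hj, rfl⟩
  · rw [vf_head σ h1, gf_code σ hh hm (by omega)]
    rw [if_pos (by omega : t < h), if_pos rfl]
  · rw [vf_bridge σ hh hq hj]
    by_cases hpar : j % 2 = 0
    · rw [if_pos hpar, gf_code σ hh (by omega) (by omega)]
      rw [if_pos (by omega : j/2 < h), if_neg (by omega : ¬ q + 1 = 0)]
      simp only [Nat.add_sub_cancel]
      omega
    · rw [if_neg hpar, gf_code σ hh (by omega) (by omega)]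
      rw [if_neg (by omega : ¬ h + j/2 < h), if_neg (by omega : ¬ q = m - 1)]
      omega
  · rw [vf_tail σ hm hh hj, gf_code σ hh (by omega) (by omega)]
    rw [if_neg (by omega : ¬ h + j < h), if_pos rfl]
    omega

lemma vf_inj {m h : ℕ} (σ : Equiv.Perm (Fin m)) (hm : 0 < m) (hh : 0 < h) {t t' : ℕ}
    (ht : t < m*(2*h)) (ht' : t' < m*(2*h)) (he : vf m h σ t = vf m h σ t') : t = t' := by
  rw [← gf_vf σ hm hh ht, ← gf_vf σ hm hh ht', he]

/-- The seven possible shapes of an edge of `P_σ` (`β = bl σ`), for `m ≥ 2`. -/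
def ShapeOf (m h : ℕ) (β : ℕ → ℕ) (v1 v2 : ℕ) : Prop :=
  (∃ i, i+1 < h ∧ v1 = code h (β 0) i ∧ v2 = code h (β 0) (i+1)) ∨
  (v1 = code h (β 0) (h-1) ∧ v2 = code h (β 1) 0) ∨
  (∃ q i, q+1 < m ∧ i < h ∧ v1 = code h (β (q+1)) i ∧ v2 = code h (β q) (h+i)) ∨
  (∃ q i, q+1 < m ∧ i+1 < h ∧ v1 = code h (β q) (h+i) ∧ v2 = code h (β (q+1)) (i+1)) ∨
  (∃ q, q+2 < m ∧ v1 = code h (β q) (2*h-1) ∧ v2 = code h (β (q+2)) 0) ∨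
  (v1 = code h (β (m-2)) (2*h-1) ∧ v2 = code h (β (m-1)) h) ∨
  (∃ i, i+1 < h ∧ v1 = code h (β (m-1)) (h+i) ∧ v2 = code h (β (m-1)) (h+i+1))

lemma edge_shape {m h : ℕ} (σ : Equiv.Perm (Fin m)) (hm : 2 ≤ m) (hh : 2 ≤ h) {t : ℕ}
    (ht : t + 1 < m*(2*h)) :
    ShapeOf m h (bl σ) (vf m h σ t) (vf m h σ (t+1)) := by
  have hm0 : 0 < m := by omega
  have hh0 : 0 < h := by omega
  rcases t_cases hm0 hh0 (by omega : t < m*(2*h)) with h1 | ⟨q, j, hq, hj, rfl⟩ | ⟨j, hj, rfl⟩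
  · -- head region
    by_cases h2 : t + 1 < h
    · refine Or.inl ⟨t, h2, ?_, ?_⟩
      · rw [vf_head σ h1]
      · rw [vf_head σ h2]
    · -- t = h - 1
      have hte : t = h - 1 := by omega
      refine Or.inr (Or.inl ⟨?_, ?_⟩)
      · rw [vf_head σ h1, hte]
      · rw [(by omega : t + 1 = h + (2*h)*0 + 0), vf_bridge σ hh0 (by omega) (by omega)]
        norm_num
  · -- bridge region
    rw [vf_bridge σ hh0 hq hj]
    by_cases h2 : j + 1 < 2*h
    · have e1 : vf m h σ (h + (2*h)*q + j + 1) =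
          (if (j+1) % 2 = 0 then code h (bl σ (q+1)) ((j+1)/2)
           else code h (bl σ q) (h + (j+1)/2)) := by
        rw [(by omega : h + (2*h)*q + j + 1 = h + (2*h)*q + (j+1)), vf_bridge σ hh0 hq h2]
      rw [e1]
      by_cases hpar : j % 2 = 0
      · rw [if_pos hpar, if_neg (by omega : ¬ (j+1) % 2 = 0)]
        refine Or.inr (Or.inr (Or.inl ⟨q, j/2, hq, by omega, rfl, by rw [(by omega : (j+1)/2 = j/2)]⟩))
      · rw [if_neg hpar, if_pos (by omega : (j+1) % 2 = 0)]
        refine Or.inr (Or.inr (Or.inr (Or.inl ⟨q, j/2, hq, by omega, rfl,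
          by rw [(by omega : (j+1)/2 = j/2 + 1)]⟩)))
    · -- j = 2h - 1
      have hje : j = 2*h - 1 := by omega
      have hpar : ¬ j % 2 = 0 := by omega
      rw [if_neg hpar]
      have hv1 : h + j/2 = 2*h - 1 := by omega
      rw [hv1, hje]
      by_cases h3 : q + 2 < m
      · have e1 : vf m h σ (h + (2*h)*q + (2*h-1) + 1) = code h (bl σ (q+2)) 0 := by
          rw [(by have e2 : (2*h)*(q+1) = (2*h)*q + 2*h := by ring
                  omega : h + (2*h)*q + (2*h-1) + 1 = h + (2*h)*(q+1) + 0),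
            vf_bridge σ hh0 (by omega) (by omega)]
          norm_num
        rw [e1]
        exact Or.inr (Or.inr (Or.inr (Or.inr (Or.inl ⟨q, h3, rfl, rfl⟩))))
      · -- q = m - 2
        have hqe : q = m - 2 := by omega
        have harith : h + (2*h)*q + (2*h-1) + 1 = m*(2*h) - h + 0 := by
          have e2 : (2*h)*q + 2*h = (2*h)*(q+1) := by ring
          have e3 : (2*h)*(m-1) + 2*h = (2*h)*m := by
            rw [← Nat.mul_succ]; congr 1; omega
          have e3' : q + 1 = m - 1 := by omega
          have e4 : (2*h)*m = m*(2*h) := Nat.mul_comm _ _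
          have e5 : 2*h + 2*h ≤ m*(2*h) := by
            calc 2*h + 2*h = 2*(2*h) := by ring
            _ ≤ m*(2*h) := Nat.mul_le_mul_right _ (by omega)
          rw [e3'] at e2
          omega
        have e1 : vf m h σ (h + (2*h)*q + (2*h-1) + 1) = code h (bl σ (m-1)) h := by
          rw [harith, vf_tail σ hm0 hh0 hh0]
          norm_num
        rw [e1, hqe]
        exact Or.inr (Or.inr (Or.inr (Or.inr (Or.inr (Or.inl ⟨rfl, rfl⟩)))))
  · -- tail region
    have h1 : 2*h ≤ m * (2*h) := by
      have := Nat.mul_le_mul_right (2*h) hm0; omega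
    have hj1 : j + 1 < h := by omega
    have e1 : vf m h σ (m*(2*h) - h + j + 1) = code h (bl σ (m-1)) (h + (j+1)) := by
      rw [(by omega : m*(2*h) - h + j + 1 = m*(2*h) - h + (j+1)), vf_tail σ hm0 hh0 hj1]
    rw [e1, vf_tail σ hm0 hh0 hj]
    exact Or.inr (Or.inr (Or.inr (Or.inr (Or.inr (Or.inr ⟨j, hj1, rfl, by rw [Nat.add_assoc]⟩)))))


lemma bridge_lt {m h q j : ℕ} (hq : q + 1 < m) (hj : j < 2*h) :
    h + (2*h)*q + j < m*(2*h) - h := by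
  have e1 : (2*h)*q + 2*h = (q+1)*(2*h) := by ring
  have e2 : (q+1)*(2*h) ≤ (m-1)*(2*h) := Nat.mul_le_mul_right _ (by omega)
  have e3 : (m-1)*(2*h) = m*(2*h) - 2*h := by rw [Nat.sub_mul, one_mul]
  have e4 : 2*h + 2*h ≤ m*(2*h) := by
    calc 2*h + 2*h = 2*(2*h) := by ring
    _ ≤ m*(2*h) := Nat.mul_le_mul_right _ (by omega)
  omega

section Bundle

variable (m h : ℕ) (hm : 0 < m) (hh : 0 < h)
include hm hh

lemma n_pos : 0 < m * (2*h) := Nat.mul_pos hm (by omega)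

/-- The vertex of `P_σ` at position `t`, as an element of `Fin (m*(2*h))`. -/
def pv (σ : Equiv.Perm (Fin m)) (t : ℕ) : Fin (m*(2*h)) :=
  ⟨vf m h σ (min t (m*(2*h) - 1)),
    vf_lt σ hm hh (by have := n_pos m h hm hh; omega)⟩

lemma pv_val (σ : Equiv.Perm (Fin m)) {t : ℕ} (ht : t < m*(2*h)) :
    (pv m h hm hh σ t : ℕ) = vf m h σ t := by
  show vf m h σ (min t (m*(2*h) - 1)) = vf m h σ t
  rw [Nat.min_eq_left (by omega)]

lemma pv_ne (σ : Equiv.Perm (Fin m)) {t : ℕ} (ht : t < m*(2*h) - 1) :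
    pv m h hm hh σ t ≠ pv m h hm hh σ (t+1) := by
  intro hc
  have hc' := congrArg Fin.val hc
  rw [pv_val m h hm hh σ (by omega), pv_val m h hm hh σ (by omega)] at hc'
  exact absurd (vf_inj σ hm hh (by omega) (by omega) hc') (by omega)

lemma pv_inj (σ : Equiv.Perm (Fin m)) {t t' : ℕ} (ht : t < m*(2*h)) (ht' : t' < m*(2*h))
    (he : pv m h hm hh σ t = pv m h hm hh σ t') : t = t' := by
  have hc' := congrArg Fin.val he
  rw [pv_val m h hm hh σ ht, pv_val m h hm hh σ ht'] at hc'
  exact vf_inj σ hm hh ht ht' hc'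

/-- The Hamiltonian walk `P_σ`. -/
def hamW (σ : Equiv.Perm (Fin m)) :
    (⊤ : SimpleGraph (Fin (m*(2*h)))).Walk (pv m h hm hh σ 0) (pv m h hm hh σ (m*(2*h) - 1)) :=
  walkOfFn (pv m h hm hh σ) (m*(2*h) - 1) (fun t ht => pv_ne m h hm hh σ ht)

lemma hamW_support (σ : Equiv.Perm (Fin m)) :
    (hamW m h hm hh σ).support = (List.range (m*(2*h))).map (pv m h hm hh σ) := by
  unfold hamW
  have e : m*(2*h) - 1 + 1 = m*(2*h) := by have := n_pos m h hm hh; omega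
  rw [support_walkOfFn, e]

lemma hamW_mem_edges (σ : Equiv.Perm (Fin m)) (e : Sym2 (Fin (m*(2*h)))) :
    e ∈ (hamW m h hm hh σ).edges ↔
      ∃ t, t < m*(2*h) - 1 ∧ e = s(pv m h hm hh σ t, pv m h hm hh σ (t+1)) :=
  mem_edges_walkOfFn _ _ _ e

lemma hamW_isHamiltonian (σ : Equiv.Perm (Fin m)) : (hamW m h hm hh σ).IsHamiltonian := by
  intro v
  have hnd : ((List.range (m*(2*h))).map (pv m h hm hh σ)).Nodup := by
    refine List.Nodup.map_on ?_ List.nodup_range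
    intro x hx y hy hxy
    simp only [List.mem_range] at hx hy
    exact pv_inj m h hm hh σ hx hy hxy
  have hsurj : Function.Surjective (fun t : Fin (m*(2*h)) => pv m h hm hh σ t.val) := by
    rw [← Finite.injective_iff_surjective]
    intro x y hxy
    exact Fin.val_injective (pv_inj m h hm hh σ x.isLt y.isLt hxy)
  obtain ⟨t, ht⟩ := hsurj v
  have hmem : v ∈ (List.range (m*(2*h))).map (pv m h hm hh σ) := by
    rw [List.mem_map]
    exact ⟨t.val, by simp [t.isLt], ht⟩
  rw [hamW_support]
  exact List.count_eq_one_of_mem hnd hmem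

/-- The bundled Hamiltonian path `P_σ`. -/
def mkHam (σ : Equiv.Perm (Fin m)) : HamPath (m*(2*h)) :=
  ⟨_, _, hamW m h hm hh σ, hamW_isHamiltonian m h hm hh σ⟩

lemma mkHam_inj : Function.Injective (mkHam m h hm hh) := by
  intro σ τ he
  have hsup := congrArg (fun P : HamPath (m*(2*h)) => P.walk.support) he
  simp only [mkHam] at hsup
  rw [hamW_support, hamW_support, List.map_inj_left] at hsup
  have hvf : ∀ t, t < m*(2*h) → vf m h σ t = vf m h τ t := by
    intro t ht
    have := hsup t (by simpa using ht)
    have := congrArg Fin.val this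
    rwa [pv_val m h hm hh σ ht, pv_val m h hm hh τ ht] at this
  have hbl : ∀ q, q < m → bl σ q = bl τ q := by
    intro q hq
    rcases Nat.eq_zero_or_pos q with rfl | hq0
    · have h0 := hvf 0 (by have := n_pos m h hm hh; omega)
      rw [vf_head σ hh, vf_head τ hh] at h0
      exact (code_inj (by omega) (by omega) h0).1
    · have htlt : h + (2*h)*(q-1) + 0 < m*(2*h) := by
        have := bridge_lt (h := h) (by omega : (q-1) + 1 < m) (by omega : 0 < 2*h)
        omega
      have h0 := hvf (h + (2*h)*(q-1) + 0) htlt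
      rw [vf_bridge σ hh (by omega) (by omega), vf_bridge τ hh (by omega) (by omega)] at h0
      norm_num at h0
      have := (code_inj (by omega) (by omega) h0).1
      rwa [(by omega : q - 1 + 1 = q)] at this
  ext x
  have := hbl x.val x.isLt
  unfold bl at this
  rw [dif_pos x.isLt, dif_pos x.isLt] at this
  simpa [Fin.ext_iff] using this

end Bundle


lemma exists_good {m : ℕ} (σ τ : Equiv.Perm (Fin m)) (hm : 0 < m) (hst : σ ≠ τ) :
    ∃ q, 1 ≤ q ∧ q < m ∧
      (¬ ∃ t, t + 1 < m ∧ bl τ t = bl σ (q-1) ∧ bl τ (t+1) = bl σ q) ∧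
      (2 ≤ q → ¬ ∃ t, t + 2 < m ∧ bl τ t = bl σ (q-2) ∧ bl τ (t+2) = bl σ q) := by
  by_contra hc
  push_neg at hc
  set ρ := τ⁻¹ * σ with hρ
  have hρlt : ∀ q, bl ρ q < m := fun q => bl_lt hm ρ q
  have hτρ : ∀ q, q < m → bl τ (bl ρ q) = bl σ q := by
    intro q hq
    unfold bl
    rw [dif_pos hq, dif_pos hq, dif_pos ((ρ ⟨q, hq⟩).isLt)]
    have : (⟨((ρ ⟨q, hq⟩ : Fin m) : ℕ), (ρ ⟨q, hq⟩).isLt⟩ : Fin m) = ρ ⟨q, hq⟩ := rfl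
    rw [this, hρ, Equiv.Perm.mul_apply, Equiv.Perm.inv_def, Equiv.apply_symm_apply]
  have main : ∀ q, q < m → bl ρ q = bl ρ 0 + q := by
    intro q
    induction q using Nat.strong_induction_on with
    | _ q ih =>
      intro hq
      rcases Nat.eq_zero_or_pos q with rfl | hq1
      · omega
      by_cases hA : ∃ t, t + 1 < m ∧ bl τ t = bl σ (q-1) ∧ bl τ (t+1) = bl σ q
      · obtain ⟨t, ht1, hta, htb⟩ := hA
        have e1 : bl τ t = bl τ (bl ρ (q-1)) := by rw [hta, hτρ (q-1) (by omega)]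
        have e2 : t = bl ρ (q-1) := bl_inj τ (by omega) (hρlt _) e1
        have e3 : bl τ (t+1) = bl τ (bl ρ q) := by rw [htb, hτρ q hq]
        have e4 : t + 1 = bl ρ q := bl_inj τ (by omega) (hρlt _) e3
        have e5 := ih (q-1) (by omega) (by omega)
        omega
      · obtain ⟨hq2, t, ht2, hta, htb⟩ := hc q hq1 hq (by push_neg at hA; exact hA)
        have e1 : bl τ t = bl τ (bl ρ (q-2)) := by rw [hta, hτρ (q-2) (by omega)]
        have e2 : t = bl ρ (q-2) := bl_inj τ (by omega) (hρlt _) e1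
        have e3 : bl τ (t+2) = bl τ (bl ρ q) := by rw [htb, hτρ q hq]
        have e4 : t + 2 = bl ρ q := bl_inj τ (by omega) (hρlt _) e3
        have e5 := ih (q-2) (by omega) (by omega)
        omega
  have hlast := main (m-1) (by omega)
  have h0 : bl ρ 0 = 0 := by have := hρlt (m-1); omega
  have hall : ∀ q, q < m → bl ρ q = q := by intro q hq; rw [main q hq, h0]; omega
  have hρ1 : ρ = 1 := by
    ext x
    have := hall x.val x.isLt
    unfold bl at this
    rw [dif_pos x.isLt] at this
    simpa [Fin.ext_iff] using this
  have : τ = σ := by rwa [hρ, inv_mul_eq_one] at hρ1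
  exact hst this.symm

lemma no_collide {m h : ℕ} (σ τ : Equiv.Perm (Fin m)) (hm2 : 2 ≤ m) (hh2 : 2 ≤ h)
    {q : ℕ} (hq1 : 1 ≤ q) (hqm : q < m)
    (GA : ∀ t, t + 1 < m → bl τ t = bl σ (q-1) → bl τ (t+1) = bl σ q → False)
    (GB : ∀ t, 2 ≤ q → t + 2 < m → bl τ t = bl σ (q-2) → bl τ (t+2) = bl σ q → False)
    {c1 c2 d1 d2 : ℕ}
    (hc : (q = 1 ∧ c1 = code h (bl σ 0) (h-1) ∧ c2 = code h (bl σ q) 0) ∨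
          (2 ≤ q ∧ c1 = code h (bl σ (q-2)) (2*h-1) ∧ c2 = code h (bl σ q) 0) ∨
          (∃ i, i < h ∧ c1 = code h (bl σ q) i ∧ c2 = code h (bl σ (q-1)) (h+i)) ∨
          (∃ i, i+1 < h ∧ c1 = code h (bl σ (q-1)) (h+i) ∧ c2 = code h (bl σ q) (i+1)))
    (hd : ShapeOf m h (bl τ) d1 d2)
    (hor : (c1 = d1 ∧ c2 = d2) ∨ (c1 = d2 ∧ c2 = d1)) : False := by
  have hPA : bl σ (q-1) = bl σ q → False := fun e => by
    have := bl_inj σ (by omega) (by omega) e; omega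
  rcases hc with ⟨hqe, hc1, hc2⟩ | ⟨hqe, hc1, hc2⟩ | ⟨i, hi, hc1, hc2⟩ | ⟨i, hi, hc1, hc2⟩ <;>
    subst hc1 <;> subst hc2 <;>
    (rcases hd with ⟨i', hi', hd1, hd2⟩ | ⟨hd1, hd2⟩ | ⟨q', i', hq', hi', hd1, hd2⟩ |
      ⟨q', i', hq', hi', hd1, hd2⟩ | ⟨q', hq', hd1, hd2⟩ | ⟨hd1, hd2⟩ | ⟨i', hi', hd1, hd2⟩) <;>
    subst hd1 <;> subst hd2 <;> rcases hor with ⟨e1, e2⟩ | ⟨e1, e2⟩ <;>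
    (obtain ⟨B1, R1⟩ := code_inj (by omega) (by omega) e1) <;>
    (obtain ⟨B2, R2⟩ := code_inj (by omega) (by omega) e2) <;>
    (first
      | omega
      | exact GA q' (by omega) B2.symm B1.symm
      | exact GA q' (by omega) B1.symm B2.symm
      | exact GB q' (by omega) (by omega) B1.symm B2.symm
      | exact GA 0 (by omega) (by rw [(by omega : q - 1 = 0)]; exact B1.symm)
          (by simpa using B2.symm)
      | exact hPA (by rw [(by omega : q - 1 = 0), B1, ← B2]))


lemma run_edge_form {m h : ℕ} (σ : Equiv.Perm (Fin m)) (hh2 : 2 ≤ h) {q : ℕ}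
    (hq1 : 1 ≤ q) (hqm : q < m) {i : ℕ} (hi : i < 2*h) :
    (q = 1 ∧ vf m h σ (h + (2*h)*(q-1) - 1 + i) = code h (bl σ 0) (h-1) ∧
       vf m h σ (h + (2*h)*(q-1) - 1 + i + 1) = code h (bl σ q) 0) ∨
    (2 ≤ q ∧ vf m h σ (h + (2*h)*(q-1) - 1 + i) = code h (bl σ (q-2)) (2*h-1) ∧
       vf m h σ (h + (2*h)*(q-1) - 1 + i + 1) = code h (bl σ q) 0) ∨
    (∃ i0, i0 < h ∧ vf m h σ (h + (2*h)*(q-1) - 1 + i) = code h (bl σ q) i0 ∧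
       vf m h σ (h + (2*h)*(q-1) - 1 + i + 1) = code h (bl σ (q-1)) (h+i0)) ∨
    (∃ i0, i0+1 < h ∧ vf m h σ (h + (2*h)*(q-1) - 1 + i) = code h (bl σ (q-1)) (h+i0) ∧
       vf m h σ (h + (2*h)*(q-1) - 1 + i + 1) = code h (bl σ q) (i0+1)) := by
  set T := h + (2*h)*(q-1) - 1 with hT
  rcases Nat.eq_zero_or_pos i with rfl | hi1
  · -- i = 0 : the incoming edge
    have hc2 : vf m h σ (T + 0 + 1) = code h (bl σ q) 0 := by
      have e : T + 0 + 1 = h + (2*h)*(q-1) + 0 := by omega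
      rw [e, vf_bridge σ (by omega) (by omega) (by omega)]
      norm_num
      rw [(by omega : q - 1 + 1 = q)]
    rcases eq_or_lt_of_le hq1 with hq1' | hq2
    · left
      refine ⟨hq1'.symm, ?_, hc2⟩
      have e0 : (2*h)*(q-1) = 0 := by rw [(by omega : q-1 = 0)]; exact Nat.mul_zero _
      have e : T + 0 = h - 1 := by omega
      rw [e, vf_head σ (by omega)]
    · right; left
      refine ⟨by omega, ?_, hc2⟩
      have hmul2 : (2*h)*(q-2) + 2*h = (2*h)*(q-1) := by rw [← Nat.mul_succ]; congr 1; omega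
      have e : T + 0 = h + (2*h)*(q-2) + (2*h - 1) := by omega
      rw [e, vf_bridge σ (by omega) (by omega) (by omega)]
      rw [if_neg (by omega)]
      rw [(by omega : h + (2*h - 1)/2 = 2*h - 1)]
  · -- i ≥ 1 : bridge edges
    have hc1e : T + i = h + (2*h)*(q-1) + (i-1) := by omega
    have hc2e : T + i + 1 = h + (2*h)*(q-1) + i := by omega
    by_cases hpar : (i-1) % 2 = 0
    · right; right; left
      refine ⟨(i-1)/2, by omega, ?_, ?_⟩
      · rw [hc1e, vf_bridge σ (by omega) (by omega) (by omega), if_pos hpar,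
          (by omega : q - 1 + 1 = q)]
      · rw [hc2e, vf_bridge σ (by omega) (by omega) hi, if_neg (by omega),
          (by omega : h + i/2 = h + (i-1)/2)]
    · right; right; right
      refine ⟨(i-1)/2, by omega, ?_, ?_⟩
      · rw [hc1e, vf_bridge σ (by omega) (by omega) (by omega), if_neg hpar]
      · rw [hc2e, vf_bridge σ (by omega) (by omega) hi, if_pos (by omega),
          (by omega : i/2 = (i-1)/2 + 1), (by omega : q - 1 + 1 = q)]

lemma sep_hamW {m h : ℕ} (hm : 0 < m) (hh : 0 < h) (hh2 : 2 ≤ h)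
    (σ τ : Equiv.Perm (Fin m)) (hst : σ ≠ τ) :
    SepWalks (2*h) (hamW m h hm hh σ) (hamW m h hm hh τ) := by
  have hm2 : 2 ≤ m := by
    by_contra hcon
    exact hst (by
      ext x
      have h1 := (σ x).isLt
      have h2 := (τ x).isLt
      omega)
  have hnp := n_pos m h hm hh
  obtain ⟨q, hq1, hqm, GA0, GB0⟩ := exists_good σ τ hm hst
  have GA : ∀ t, t + 1 < m → bl τ t = bl σ (q-1) → bl τ (t+1) = bl σ q → False :=
    fun t h1 h2 h3 => GA0 ⟨t, h1, h2, h3⟩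
  have GB : ∀ t, 2 ≤ q → t + 2 < m → bl τ t = bl σ (q-2) → bl τ (t+2) = bl σ q → False :=
    fun t hq2 h1 h2 h3 => (GB0 hq2) ⟨t, h1, h2, h3⟩
  have hbl := bridge_lt (h := h) (show (q-1)+1 < m by omega) (show 2*h - 1 < 2*h by omega)
  set T := h + (2*h)*(q-1) - 1 with hT
  have hTn : T + 2*h < m*(2*h) := by omega
  have hadj : ∀ t, t < 2*h →
      (fun i => pv m h hm hh σ (T+i)) t ≠ (fun i => pv m h hm hh σ (T+i)) (t+1) := by
    intro t ht
    simp only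
    intro hcon
    have := pv_inj m h hm hh σ (by omega) (by omega) hcon
    omega
  refine ⟨_, _, walkOfFn (fun i => pv m h hm hh σ (T+i)) (2*h) hadj, ?_, ?_, Or.inl ⟨?_, ?_⟩⟩
  · rw [SimpleGraph.Walk.isPath_def, support_walkOfFn]
    refine List.Nodup.map_on ?_ List.nodup_range
    intro x hx y hy hxy
    simp only [List.mem_range] at hx hy
    have := pv_inj m h hm hh σ (by omega) (by omega) hxy
    omega
  · exact length_walkOfFn _ _ _
  · intro e he
    rw [mem_edges_walkOfFn] at he
    obtain ⟨t, ht, rfl⟩ := he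
    rw [hamW_mem_edges]
    exact ⟨T + t, by omega, rfl⟩
  · intro e he hQ
    rw [mem_edges_walkOfFn] at he
    obtain ⟨i, hi, rfl⟩ := he
    rw [hamW_mem_edges] at hQ
    obtain ⟨u, hu, hQe⟩ := hQ
    rw [Sym2.eq_iff] at hQe
    have key := edge_shape τ hm2 hh2 (show u + 1 < m*(2*h) by omega)
    have hor : (vf m h σ (T+i) = vf m h τ u ∧ vf m h σ (T+i+1) = vf m h τ (u+1)) ∨
        (vf m h σ (T+i) = vf m h τ (u+1) ∧ vf m h σ (T+i+1) = vf m h τ u) := by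
      rcases hQe with ⟨a1, a2⟩ | ⟨a1, a2⟩
      · left
        constructor
        · have := congrArg Fin.val a1
          rwa [pv_val m h hm hh σ (by omega), pv_val m h hm hh τ (by omega)] at this
        · have := congrArg Fin.val a2
          rwa [pv_val m h hm hh σ (by omega), pv_val m h hm hh τ (by omega)] at this
      · right
        constructor
        · have := congrArg Fin.val a1
          rwa [pv_val m h hm hh σ (by omega), pv_val m h hm hh τ (by omega)] at this
        · have := congrArg Fin.val a2
          rwa [pv_val m h hm hh σ (by omega), pv_val m h hm hh τ (by omega)] at this
    exact no_collide σ τ hm2 hh2 hq1 hqm GA GB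
      (run_edge_form σ hh2 hq1 hqm hi) key hor

end SepLB

/-- **Theorem 2, lower bound.** For every even `k > 2` and every positive multiple `n`
of `k` there is a family `F` of Hamiltonian paths in `K_n` with `|F| ≥ (n/k)!` such that
any two distinct members are `k`-separated. -/
theorem hamPath_separated_lower_bound_even (k n : ℕ) (hk : 2 < k) (hke : Even k)
    (hn : 0 < n) (hkn : k ∣ n) :
    ∃ F : Set (HamPath n),
      (∀ P ∈ F, ∀ Q ∈ F, P ≠ Q → SepHam k P Q) ∧
      (n / k).factorial ≤ F.ncard := by
  obtain ⟨h, hkh⟩ := hke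
  have hk2 : k = 2*h := by omega
  have hh2 : 2 ≤ h := by omega
  obtain ⟨m, rfl⟩ : ∃ m, n = m * (2*h) := by
    obtain ⟨c, hc⟩ := hkn
    exact ⟨c, by rw [hc, hk2]; ring⟩
  have hm0 : 0 < m := by
    rcases Nat.eq_zero_or_pos m with rfl | h0
    · simp at hn
    · exact h0
  have hh0 : 0 < h := by omega
  have hdiv : m * (2*h) / k = m := by
    rw [hk2]
    exact Nat.mul_div_cancel m (by omega)
  refine ⟨Set.range (SepLB.mkHam m h hm0 hh0), ?_, ?_⟩
  · rintro P ⟨σ, rfl⟩ Q ⟨τ, rfl⟩ hne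
    have hst : σ ≠ τ := fun e => hne (congrArg _ e)
    show SepWalks k _ _
    rw [hk2]
    exact SepLB.sep_hamW hm0 hh0 hh2 σ τ hst
  · rw [hdiv]
    have hcard : (Set.range (SepLB.mkHam m h hm0 hh0)).ncard
        = (Fintype.card (Fin m)).factorial := by
      rw [← Set.image_univ, Set.ncard_image_of_injective _ (SepLB.mkHam_inj m h hm0 hh0),
        Set.ncard_univ, Nat.card_eq_fintype_card, Fintype.card_perm]
    rw [hcard, Fintype.card_fin]
end

section
/- Let k > 2 be an even integer and let n be a positive multiple of k. Then any family F of Hamiltonian paths in the complete graph on the vertex set {1,...,n} such that for any two distinct paths P, Q in F there is a path of k edges which is a subpath of one of P, Q and shares no edge with the other, satisfies |F| ≤ 3^n·(n/k)!. -/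
open SimpleGraph

namespace HamSepAux

/-- A nodup ±1-chain is monotone (increasing or decreasing). -/
lemma chain_mono (l : List ℕ) (h : l.Chain' (fun a b => b = a + 1 ∨ a = b + 1))
    (hd : l.Nodup) : l.Chain' (fun a b => b = a + 1) ∨ l.Chain' (fun a b => a = b + 1) := by
  induction l with
  | nil => exact Or.inl List.isChain_nil
  | cons a t ih =>
    cases t with
    | nil => exact Or.inl (List.isChain_singleton a)
    | cons b t' =>
      have h' := (List.isChain_cons_cons.1 h).2
      have hd' := (List.nodup_cons.1 hd).2
      have hab := (List.isChain_cons_cons.1 h).1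
      rcases ih h' hd' with hc | hc
      · rcases hab with hab | hab
        · exact Or.inl (List.isChain_cons_cons.2 ⟨hab, hc⟩)
        · -- a = b + 1, b::t' increasing
          cases t' with
          | nil => exact Or.inr (List.isChain_cons_cons.2 ⟨hab, List.isChain_singleton b⟩)
          | cons c t'' =>
            exfalso
            have hbc := (List.isChain_cons_cons.1 hc).1
            have : a ∈ b :: c :: t'' := by
              have : a = c := by omega
              simp [this]
            exact (List.nodup_cons.1 hd).1 this
      · rcases hab with hab | hab
        · cases t' with
          | nil => exact Or.inl (List.isChain_cons_cons.2 ⟨hab, List.isChain_singleton b⟩)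
          | cons c t'' =>
            exfalso
            have hbc := (List.isChain_cons_cons.1 hc).1
            have : a ∈ b :: c :: t'' := by
              have : a = c := by omega
              simp [this]
            exact (List.nodup_cons.1 hd).1 this
        · exact Or.inr (List.isChain_cons_cons.2 ⟨hab, hc⟩)

/-- Entries of an increasing (+1) chain. -/
lemma chain_getElem (l : List ℕ) (h : l.Chain' (fun a b => b = a + 1)) :
    ∀ (i : ℕ) (hi : i < l.length), l[i] = l[0]'(Nat.lt_of_le_of_lt (Nat.zero_le i) hi) + i := by
  induction l with
  | nil => intro i hi; simp at hi
  | cons a t ih =>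
    intro i hi
    cases i with
    | zero => simp
    | succ j =>
      have ht := (List.isChain_cons.1 h).2
      have hj : j < t.length := by simpa using hi
      have h0 : 0 < t.length := Nat.lt_of_le_of_lt (Nat.zero_le j) hj
      have ht0 : t[0] = a + 1 := by
        cases t with
        | nil => simp at h0
        | cons b t' =>
          have := (List.isChain_cons_cons.1 h).1
          simpa using this
      have h2 := ih ht j hj
      have h3 : (a :: t)[0] = a := rfl
      simp only [List.getElem_cons_succ, h3]
      omega

/-- Edges of a walk in terms of its support. -/
lemma walk_edges_getElem {V : Type*} {G : SimpleGraph V} {x y : V} (w : G.Walk x y) :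
    ∀ (i : ℕ) (hi : i < w.length),
      w.edges[i]'(by rwa [SimpleGraph.Walk.length_edges]) =
        s(w.support[i]'(by rw [SimpleGraph.Walk.length_support]; omega),
          w.support[i+1]'(by rw [SimpleGraph.Walk.length_support]; omega)) := by
  induction w with
  | nil => intro i hi; simp at hi
  | cons h p ih =>
    intro i hi
    cases i with
    | zero => cases p <;> simp
    | succ j =>
      have hj : j < p.length := by simpa [SimpleGraph.Walk.length_cons] using hi
      have := ih j hj
      simpa using this

/-- If all edges of a walk lie in a list `L`, consecutive support vertices are joined in `L`. -/
lemma walk_support_chain {V : Type*} {G : SimpleGraph V} {x y : V} (w : G.Walk x y)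
    (L : List (Sym2 V)) (h : ∀ e ∈ w.edges, e ∈ L) :
    w.support.Chain' (fun u v => s(u, v) ∈ L) := by
  induction w with
  | nil => exact List.isChain_singleton _
  | cons hadj p ih =>
    rw [SimpleGraph.Walk.support_cons]
    rw [List.Chain', List.isChain_cons]
    constructor
    · intro z hz
      rw [SimpleGraph.Walk.support_eq_cons p] at hz
      simp only [List.head?_cons, Option.mem_some_iff] at hz
      subst hz
      exact h _ (by rw [SimpleGraph.Walk.edges_cons]; exact List.mem_cons_self)
    · exact ih (fun e he => h e (by rw [SimpleGraph.Walk.edges_cons]; right; exact he))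

end HamSepAux

namespace HamSepAux2

open HamSepAux

variable {n : ℕ}

/-- The support list of a Hamiltonian path. -/
def supp (P : HamPath n) : List (Fin n) := P.walk.support

lemma npos (P : HamPath n) : 0 < n := P.first.pos

lemma supp_length (P : HamPath n) : (supp P).length = n := by
  have h := P.isHamiltonian.length_eq
  have h2 : (supp P).length = P.walk.length + 1 := SimpleGraph.Walk.length_support _
  rw [h2, h]
  simp only [Fintype.card_fin]
  have := npos P
  omega

lemma mem_supp (P : HamPath n) (v : Fin n) : v ∈ supp P :=
  P.isHamiltonian.mem_support v

lemma nodup_supp (P : HamPath n) : (supp P).Nodup :=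
  P.isHamiltonian.isPath.support_nodup

/-- Index of a vertex along the path. -/
def idx (P : HamPath n) (v : Fin n) : ℕ := (supp P).idxOf v

/-- Vertex at a given position along the path. -/
def vtx (P : HamPath n) (i : ℕ) : Fin n := (supp P).getD i P.first

lemma idx_lt (P : HamPath n) (v : Fin n) : idx P v < n := by
  have h := List.idxOf_lt_length_iff.2 (mem_supp P v)
  rwa [supp_length] at h

lemma vtx_eq_getElem (P : HamPath n) (i : ℕ) (hi : i < n) :
    vtx P i = (supp P)[i]'(by rwa [supp_length]) := by
  rw [vtx, List.getD_eq_getElem?_getD, List.getElem?_eq_getElem (by rwa [supp_length])]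
  rfl

lemma vtx_idx (P : HamPath n) (v : Fin n) : vtx P (idx P v) = v := by
  rw [vtx_eq_getElem P _ (idx_lt P v)]
  exact List.getElem_idxOf (by rw [supp_length]; exact idx_lt P v)

lemma idx_vtx (P : HamPath n) (i : ℕ) (hi : i < n) : idx P (vtx P i) = i := by
  have h1 : (supp P)[idx P (vtx P i)]'(by rw [supp_length]; exact idx_lt P _) = vtx P i :=
    List.getElem_idxOf _
  have h2 : (supp P)[i]'(by rwa [supp_length]) = vtx P i := (vtx_eq_getElem P i hi).symm
  exact (List.Nodup.getElem_inj_iff (nodup_supp P)).1 (h1.trans h2.symm)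

lemma idx_inj (P : HamPath n) {u v : Fin n} (h : idx P u = idx P v) : u = v := by
  rw [← vtx_idx P u, ← vtx_idx P v, h]

lemma vtx_inj (P : HamPath n) {i j : ℕ} (hi : i < n) (hj : j < n)
    (h : vtx P i = vtx P j) : i = j := by
  rw [← idx_vtx P i hi, ← idx_vtx P j hj, h]

/-- The edge at position `i` (0-indexed) of the Hamiltonian path. -/
lemma crossing_mem (P : HamPath n) (i : ℕ) (hi : i + 1 < n) :
    s(vtx P i, vtx P (i + 1)) ∈ P.walk.edges := by
  have hlen : P.walk.length = n - 1 := by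
    have := P.isHamiltonian.length_eq; simpa using this
  have hi' : i < P.walk.length := by omega
  have := walk_edges_getElem P.walk i hi'
  rw [vtx_eq_getElem P i (by omega), vtx_eq_getElem P (i+1) hi]
  simp only [supp]
  rw [← this]
  exact List.getElem_mem _

lemma edge_adj_idx (P : HamPath n) {u v : Fin n} (h : s(u, v) ∈ P.walk.edges) :
    idx P v = idx P u + 1 ∨ idx P u = idx P v + 1 := by
  obtain ⟨i, hi, hev⟩ := List.mem_iff_getElem.1 h
  have hi' : i < P.walk.length := by rwa [SimpleGraph.Walk.length_edges] at hi
  rw [walk_edges_getElem P.walk i hi'] at hev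
  have hsl : P.walk.support.length = n := supp_length P
  have hi1 : i + 1 < n := by rw [← hsl]; rw [SimpleGraph.Walk.length_support]; omega
  have h0 : P.walk.support[i]'(by omega ) = vtx P i := by
    rw [vtx_eq_getElem P i (by omega)]; rfl
  have h1 : P.walk.support[i+1]'(by rw [SimpleGraph.Walk.length_support]; omega) = vtx P (i+1) := by
    rw [vtx_eq_getElem P (i+1) hi1]; rfl
  rw [Sym2.eq_iff] at hev
  rcases hev with ⟨hu, hv⟩ | ⟨hu, hv⟩
  · left
    rw [← hu, ← hv, h0, h1, idx_vtx P i (by omega), idx_vtx P (i+1) hi1]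
  · right
    rw [← hu, ← hv, h0, h1, idx_vtx P i (by omega), idx_vtx P (i+1) hi1]

lemma key_aux (P : HamPath n) {x y : Fin n} (w : (⊤ : SimpleGraph (Fin n)).Walk x y)
    (k : ℕ) (hk : 0 < k) (hlen : w.length = k)
    (hch : (w.support.map (idx P)).Chain' (fun a b => b = a + 1)) :
    ∃ p : ℕ, k ∣ p ∧ 0 < p ∧ p < n ∧ s(vtx P (p - 1), vtx P p) ∈ w.edges := by
  have hlsl : (w.support.map (idx P)).length = k + 1 := by
    rw [List.length_map, SimpleGraph.Walk.length_support, hlen]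
  have h0 : 0 < (w.support.map (idx P)).length := by omega
  set l := w.support.map (idx P) with hl
  set a := l[0]'h0 with ha
  have hget : ∀ (i : ℕ) (hi : i < l.length), l[i] = a + i := fun i hi => chain_getElem l hch i hi
  have hlt : ∀ (i : ℕ) (hi : i < l.length), l[i] < n := by
    intro i hi
    have h2 : l[i] = idx P (w.support[i]'(by rw [SimpleGraph.Walk.length_support, hlen]; omega)) := List.getElem_map _
    rw [h2]
    exact idx_lt P _
  have hak : a + k < n := by
    have h1 := hlt k (by omega)
    rw [hget k (by omega)] at h1
    exact h1
  have hsupl : w.support.length = k + 1 := by rw [SimpleGraph.Walk.length_support, hlen]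
  have hsup : ∀ (i : ℕ) (hi : i < k + 1), w.support[i]'(by omega) = vtx P (a + i) := by
    intro i hi
    have h1 : idx P (w.support[i]'(by omega)) = a + i := by
      have h2 : l[i]'(by omega) = idx P (w.support[i]'(by omega)) := List.getElem_map _
      rw [← h2, hget i (by omega)]
    rw [← h1, vtx_idx]
  set p := (a / k + 1) * k with hp
  set A := k * (a / k) with hA
  have hmod : A + a % k = a := Nat.div_add_mod a k
  have hmlt : a % k < k := Nat.mod_lt a hk
  have hpeq : p = A + k := by rw [hp, hA]; ring
  have hap : a < p := by omega
  have hpk : p ≤ a + k := by omega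
  refine ⟨p, ⟨a / k + 1, by rw [hp]; ring⟩, by omega, by omega, ?_⟩
  set i₀ := p - 1 - a with hi₀def
  have hi₀ : i₀ < k := by omega
  have hi₀k : i₀ < w.length := by rw [hlen]; exact hi₀
  have hedge := walk_edges_getElem w i₀ hi₀k
  have hs1 : w.support[i₀]'(by rw [SimpleGraph.Walk.length_support]; omega) = vtx P (p - 1) := by
    rw [hsup i₀ (by omega)]
    congr 1
    omega
  have hs2 : w.support[i₀+1]'(by rw [SimpleGraph.Walk.length_support]; omega) = vtx P p := by
    rw [hsup (i₀+1) (by omega)]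
    congr 1
    omega
  rw [hs1, hs2] at hedge
  rw [← hedge]
  exact List.getElem_mem _

lemma key (P : HamPath n) {x y : Fin n} (w : (⊤ : SimpleGraph (Fin n)).Walk x y)
    (hw : w.IsPath) (k : ℕ) (hk : 0 < k) (hlen : w.length = k)
    (hsub : ∀ e ∈ w.edges, e ∈ P.walk.edges) :
    ∃ p : ℕ, k ∣ p ∧ 0 < p ∧ p < n ∧ s(vtx P (p - 1), vtx P p) ∈ w.edges := by
  have hch0 : w.support.Chain' (fun u v => s(u, v) ∈ P.walk.edges) :=
    walk_support_chain w _ hsub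
  have hch1 : (w.support.map (idx P)).Chain'
      (fun a b => b = a + 1 ∨ a = b + 1) :=
    List.isChain_map_of_isChain (idx P) (fun u v huv => edge_adj_idx P huv) hch0
  have hinj : Function.Injective (idx P) := fun u v h => idx_inj P h
  have hnd : (w.support.map (idx P)).Nodup := (hw.support_nodup).map hinj
  rcases chain_mono _ hch1 hnd with hc | hc
  · exact key_aux P w k hk hlen hc
  · have hrch : (w.reverse.support.map (idx P)).Chain' (fun a b => b = a + 1) := by
      rw [SimpleGraph.Walk.support_reverse, List.map_reverse, List.Chain', List.isChain_reverse]
      exact hc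
    obtain ⟨p, h1, h2, h3, h4⟩ := key_aux P w.reverse k hk
      (by rw [SimpleGraph.Walk.length_reverse]; exact hlen) hrch
    refine ⟨p, h1, h2, h3, ?_⟩
    rwa [SimpleGraph.Walk.edges_reverse, List.mem_reverse] at h4

open Finset

variable (k : ℕ)

/-- 3-coloring of vertices: 1 = left endpoint of a crossing edge, 2 = right endpoint. -/
def cmap (P : HamPath n) : Fin n → Fin 3 := fun v =>
  if idx P v % k = k - 1 ∧ idx P v + 1 < n then 1
  else if idx P v % k = 0 ∧ idx P v ≠ 0 then 2 else 0

/-- Left endpoints of crossing edges. -/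
def fL (P : HamPath n) : Fin (n / k - 1) → Fin n := fun j => vtx P (((j : ℕ) + 1) * k - 1)

/-- Right endpoints of crossing edges. -/
def gR (P : HamPath n) : Fin (n / k - 1) → Fin n := fun j => vtx P (((j : ℕ) + 1) * k)

lemma blk_bound (hk2 : 2 ≤ k) (hkn : k ∣ n) {j : ℕ} (hj : j < n / k - 1) :
    (j + 1) * k + k ≤ n := by
  obtain ⟨m, hm⟩ := hkn
  have hmk : n / k = m := by rw [hm]; exact Nat.mul_div_cancel_left m (by omega)
  rw [hmk] at hj
  calc (j + 1) * k + k = (j + 2) * k := by ring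
  _ ≤ m * k := Nat.mul_le_mul_right k (by omega)
  _ = n := by rw [hm]; ring

lemma k_le_blk {j : ℕ} : k ≤ (j + 1) * k := by
  calc k = 1 * k := (Nat.one_mul k).symm
  _ ≤ (j + 1) * k := Nat.mul_le_mul_right k (by omega)

lemma blk_mod (hk2 : 2 ≤ k) {j : ℕ} : ((j + 1) * k - 1) % k = k - 1 := by
  have h1 : (j + 1) * k - 1 = (k - 1) + j * k := by
    have : (j + 1) * k = j * k + k := by ring
    omega
  rw [h1, Nat.add_mul_mod_self_right]
  exact Nat.mod_eq_of_lt (by omega)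

lemma cmap_eq_one_iff (P : HamPath n) (v : Fin n) :
    cmap k P v = 1 ↔ (idx P v % k = k - 1 ∧ idx P v + 1 < n) := by
  unfold cmap
  split_ifs with h1 h2
  · simp [h1]
  · simp [h1]
  · simp [h1]

lemma cmap_eq_two_iff (hk2 : 2 ≤ k) (P : HamPath n) (v : Fin n) :
    cmap k P v = 2 ↔ (idx P v % k = 0 ∧ idx P v ≠ 0) := by
  unfold cmap
  split_ifs with h1 h2
  · constructor
    · intro h; exact absurd h (by decide)
    · intro h; rw [h.1] at h1; omega
  · simp [h2]
  · simp [h2]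

lemma mem_fL_iff (hk2 : 2 ≤ k) (hkn : k ∣ n) (P : HamPath n) (v : Fin n) :
    (∃ j : Fin (n / k - 1), fL k P j = v) ↔ cmap k P v = 1 := by
  rw [cmap_eq_one_iff]
  constructor
  · rintro ⟨j, rfl⟩
    have hb := blk_bound k hk2 hkn j.isLt
    have hkb := k_le_blk k (j := (j : ℕ))
    have hlt : ((j : ℕ) + 1) * k - 1 < n := by omega
    unfold fL
    rw [idx_vtx P _ hlt]
    refine ⟨blk_mod k hk2, by omega⟩
  · rintro ⟨h1, h2⟩
    have hdm := Nat.div_add_mod (idx P v) k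
    have hkpos : 0 < k := by omega
    have hc : idx P v + 1 = (idx P v / k + 1) * k := by
      have h3 : (idx P v / k + 1) * k = idx P v / k * k + k := by ring
      have h4 : idx P v / k * k = k * (idx P v / k) := Nat.mul_comm _ _
      omega
    have hcm : idx P v / k + 1 ≤ n / k - 1 := by
      by_contra hcon
      push_neg at hcon
      obtain ⟨m, hm⟩ := hkn
      have hmk : n / k = m := by rw [hm]; exact Nat.mul_div_cancel_left m (by omega)
      rw [hmk] at hcon
      -- idx v + 1 < n = m * k, but idx v + 1 = c * k with c ≥ m - 1 + 1 = m
      have h5 : m * k ≤ (idx P v / k + 1) * k := Nat.mul_le_mul_right k (by omega)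
      have h6 : k * m = m * k := Nat.mul_comm _ _
      omega
    refine ⟨⟨idx P v / k, by omega⟩, ?_⟩
    unfold fL
    simp only
    have h7 : (idx P v / k + 1) * k - 1 = idx P v := by omega
    rw [h7, vtx_idx]

lemma mem_gR_iff (hk2 : 2 ≤ k) (hkn : k ∣ n) (P : HamPath n) (v : Fin n) :
    (∃ j : Fin (n / k - 1), gR k P j = v) ↔ cmap k P v = 2 := by
  rw [cmap_eq_two_iff k hk2]
  constructor
  · rintro ⟨j, rfl⟩
    have hb := blk_bound k hk2 hkn j.isLt
    have hkb := k_le_blk k (j := (j : ℕ))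
    have hlt : ((j : ℕ) + 1) * k < n := by omega
    unfold gR
    rw [idx_vtx P _ hlt]
    constructor
    · exact Nat.mul_mod_left _ _
    · omega
  · rintro ⟨h1, h2⟩
    have hdm := Nat.div_add_mod (idx P v) k
    have hkpos : 0 < k := by omega
    have hlt := idx_lt P v
    have hc : idx P v = idx P v / k * k := by
      have h4 : idx P v / k * k = k * (idx P v / k) := Nat.mul_comm _ _
      omega
    have hq1 : 1 ≤ idx P v / k := by
      by_contra hcon
      push_neg at hcon
      interval_cases h : idx P v / k
      · omega
    have hcm : idx P v / k - 1 < n / k - 1 := by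
      obtain ⟨m, hm⟩ := hkn
      have hmk : n / k = m := by rw [hm]; exact Nat.mul_div_cancel_left m (by omega)
      rw [hmk]
      by_contra hcon
      push_neg at hcon
      have h5 : m * k ≤ idx P v / k * k := Nat.mul_le_mul_right k (by omega)
      have h6 : k * m = m * k := Nat.mul_comm _ _
      omega
    refine ⟨⟨idx P v / k - 1, hcm⟩, ?_⟩
    unfold gR
    simp only
    have h7 : (idx P v / k - 1 + 1) * k = idx P v := by
      have h8 : (idx P v / k - 1 + 1) = idx P v / k := by omega
      rw [h8]; omega
    rw [h7, vtx_idx]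

lemma fL_inj (hk2 : 2 ≤ k) (hkn : k ∣ n) (P : HamPath n) :
    Function.Injective (fL k P) := by
  intro i j h
  unfold fL at h
  have hbi := blk_bound k hk2 hkn i.isLt
  have hbj := blk_bound k hk2 hkn j.isLt
  have hki := k_le_blk k (j := (i : ℕ))
  have hkj := k_le_blk k (j := (j : ℕ))
  have := vtx_inj P (i := ((i : ℕ) + 1) * k - 1) (j := ((j : ℕ) + 1) * k - 1)
    (by omega) (by omega) h
  have hij : ((i : ℕ) + 1) * k = ((j : ℕ) + 1) * k := by omega
  have := Nat.eq_of_mul_eq_mul_right (by omega : 0 < k) hij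
  exact Fin.ext (by omega)

lemma gR_inj (hk2 : 2 ≤ k) (hkn : k ∣ n) (P : HamPath n) :
    Function.Injective (gR k P) := by
  intro i j h
  unfold gR at h
  have hbi := blk_bound k hk2 hkn i.isLt
  have hbj := blk_bound k hk2 hkn j.isLt
  have := vtx_inj P (i := ((i : ℕ) + 1) * k) (j := ((j : ℕ) + 1) * k)
    (by omega) (by omega) h
  have := Nat.eq_of_mul_eq_mul_right (by omega : 0 < k) this
  exact Fin.ext (by omega)

/-- Left endpoints as a finset. -/
def LS (P : HamPath n) : Finset (Fin n) := Finset.image (fL k P) Finset.univ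

/-- Right endpoints as a finset. -/
def RS (P : HamPath n) : Finset (Fin n) := Finset.image (gR k P) Finset.univ

lemma mem_LS_iff (hk2 : 2 ≤ k) (hkn : k ∣ n) (P : HamPath n) (v : Fin n) :
    v ∈ LS k P ↔ cmap k P v = 1 := by
  rw [LS, Finset.mem_image, ← mem_fL_iff k hk2 hkn]
  simp

lemma mem_RS_iff (hk2 : 2 ≤ k) (hkn : k ∣ n) (P : HamPath n) (v : Fin n) :
    v ∈ RS k P ↔ cmap k P v = 2 := by
  rw [RS, Finset.mem_image, ← mem_gR_iff k hk2 hkn]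
  simp

lemma card_LS (hk2 : 2 ≤ k) (hkn : k ∣ n) (P : HamPath n) :
    (LS k P).card = n / k - 1 := by
  rw [LS, Finset.card_image_of_injective _ (fL_inj k hk2 hkn P), Finset.card_univ,
    Fintype.card_fin]

lemma card_RS (hk2 : 2 ≤ k) (hkn : k ∣ n) (P : HamPath n) :
    (RS k P).card = n / k - 1 := by
  rw [RS, Finset.card_image_of_injective _ (gR_inj k hk2 hkn P), Finset.card_univ,
    Fintype.card_fin]

/-- The partner of a left endpoint: the next vertex along the path. -/
def pairD (P : HamPath n) (v : Fin n) : Fin n := vtx P (idx P v + 1)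

lemma idx_mem_LS (hk2 : 2 ≤ k) (hkn : k ∣ n) (P : HamPath n) {v : Fin n}
    (hv : v ∈ LS k P) : idx P v + 1 < n := by
  rw [mem_LS_iff k hk2 hkn, cmap_eq_one_iff] at hv
  exact hv.2

lemma pairD_mem (hk2 : 2 ≤ k) (hkn : k ∣ n) (P : HamPath n) {v : Fin n}
    (hv : v ∈ LS k P) : pairD P v ∈ RS k P := by
  rw [LS, Finset.mem_image] at hv
  obtain ⟨j, _, rfl⟩ := hv
  have hb := blk_bound k hk2 hkn j.isLt
  have hkb := k_le_blk k (j := (j : ℕ))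
  rw [RS, Finset.mem_image]
  refine ⟨j, Finset.mem_univ j, ?_⟩
  unfold fL gR pairD
  rw [idx_vtx P _ (by omega)]
  congr 1
  omega

lemma pairD_injOn (hk2 : 2 ≤ k) (hkn : k ∣ n) (P : HamPath n) {u v : Fin n}
    (hu : u ∈ LS k P) (hv : v ∈ LS k P) (h : pairD P u = pairD P v) : u = v := by
  have h1 := idx_mem_LS k hk2 hkn P hu
  have h2 := idx_mem_LS k hk2 hkn P hv
  have := vtx_inj P h1 h2 h
  exact idx_inj P (by omega)

/-- The pairing permutation. -/
noncomputable def sig (hk2 : 2 ≤ k) (hkn : k ∣ n) (P : HamPath n) :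
    Equiv.Perm (Fin (n / k - 1)) := by
  refine Equiv.ofBijective (fun a =>
    ((RS k P).orderIsoOfFin (card_RS k hk2 hkn P)).symm
      ⟨pairD P (((LS k P).orderIsoOfFin (card_LS k hk2 hkn P) a : Fin n)),
        pairD_mem k hk2 hkn P (Finset.coe_mem _)⟩) ?_
  rw [← Finite.injective_iff_bijective]
  intro a b h
  have h1 := congrArg (((RS k P).orderIsoOfFin (card_RS k hk2 hkn P))) h
  simp only [OrderIso.apply_symm_apply] at h1
  have h2 : pairD P (((LS k P).orderIsoOfFin (card_LS k hk2 hkn P) a : Fin n)) =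
      pairD P (((LS k P).orderIsoOfFin (card_LS k hk2 hkn P) b : Fin n)) :=
    congrArg Subtype.val h1
  have h3 := pairD_injOn k hk2 hkn P (Finset.coe_mem _) (Finset.coe_mem _) h2
  have h4 : ((LS k P).orderIsoOfFin (card_LS k hk2 hkn P) a) =
      ((LS k P).orderIsoOfFin (card_LS k hk2 hkn P) b) := Subtype.ext h3
  exact ((LS k P).orderIsoOfFin (card_LS k hk2 hkn P)).injective h4

lemma oio_congr {s t : Finset (Fin n)} (h : s = t) {c : ℕ} (hs : s.card = c)
    (ht : t.card = c) (a : Fin c) :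
    ((s.orderIsoOfFin hs a : Fin n)) = (t.orderIsoOfFin ht a : Fin n) := by
  subst h; rfl

lemma sig_apply (hk2 : 2 ≤ k) (hkn : k ∣ n) (P : HamPath n) (a : Fin (n / k - 1)) :
    ((RS k P).orderIsoOfFin (card_RS k hk2 hkn P) (sig k hk2 hkn P a) : Fin n) =
      pairD P (((LS k P).orderIsoOfFin (card_LS k hk2 hkn P) a : Fin n)) := by
  rw [sig]
  simp only [Equiv.ofBijective_apply, OrderIso.apply_symm_apply]

lemma crossing_subset (hk2 : 2 ≤ k) (hkn : k ∣ n) (P Q : HamPath n)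
    (hc : cmap k P = cmap k Q) (hs : sig k hk2 hkn P = sig k hk2 hkn Q)
    (p : ℕ) (hp : k ∣ p) (h0 : 0 < p) (hpn : p < n) :
    s(vtx P (p - 1), vtx P p) ∈ Q.walk.edges := by
  have hLS : LS k P = LS k Q := by
    ext v
    rw [mem_LS_iff k hk2 hkn, mem_LS_iff k hk2 hkn, hc]
  have hRS : RS k P = RS k Q := by
    ext v
    rw [mem_RS_iff k hk2 hkn, mem_RS_iff k hk2 hkn, hc]
  set v := vtx P (p - 1) with hvdef
  -- v ∈ LS k P
  have hvP : v ∈ LS k P := by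
    rw [mem_LS_iff k hk2 hkn, cmap_eq_one_iff]
    obtain ⟨c, hcc⟩ := hp
    have hc1 : 1 ≤ c := by
      by_contra hcon
      push_neg at hcon
      have hz : c = 0 := by omega
      rw [hz, Nat.mul_zero] at hcc
      omega
    have hkp : k ≤ p := by
      calc k = k * 1 := (Nat.mul_one k).symm
      _ ≤ k * c := Nat.mul_le_mul_left k hc1
      _ = p := hcc.symm
    rw [hvdef, idx_vtx P (p-1) (by omega)]
    constructor
    · have h1 : p - 1 = (k - 1) + (c - 1) * k := by
        have h2 : (c - 1) * k + k = c * k := by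
          have : c - 1 + 1 = c := by omega
          calc (c - 1) * k + k = (c - 1 + 1) * k := by ring
          _ = c * k := by rw [this]
        have h3 : c * k = k * c := Nat.mul_comm _ _
        omega
      rw [h1, Nat.add_mul_mod_self_right]
      exact Nat.mod_eq_of_lt (by omega)
    · omega
  have hvQ : v ∈ LS k Q := hLS ▸ hvP
  set oLP := (LS k P).orderIsoOfFin (card_LS k hk2 hkn P) with hoLP
  set a := oLP.symm ⟨v, hvP⟩ with ha
  have hcomp1 : (oLP a : Fin n) = v := by rw [ha, OrderIso.apply_symm_apply]
  -- P-side computation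
  have hP2 : ((RS k P).orderIsoOfFin (card_RS k hk2 hkn P) (sig k hk2 hkn P a) : Fin n) =
      pairD P v := by rw [sig_apply, hcomp1]
  -- transport to Q
  have hQL : ((LS k Q).orderIsoOfFin (card_LS k hk2 hkn Q) a : Fin n) = v := by
    rw [← oio_congr hLS (card_LS k hk2 hkn P) (card_LS k hk2 hkn Q) a]
    exact hcomp1
  have hQ2 : ((RS k Q).orderIsoOfFin (card_RS k hk2 hkn Q) (sig k hk2 hkn Q a) : Fin n) =
      pairD Q v := by rw [sig_apply, hQL]
  have htrans : pairD P v = pairD Q v := by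
    rw [← hP2, ← hQ2, ← hs]
    exact oio_congr hRS _ _ _
  -- v = fL Q j for some j, giving the crossing edge of Q
  have hvQ' := hvQ
  rw [LS, Finset.mem_image] at hvQ'
  obtain ⟨j, _, hj⟩ := hvQ'
  have hb := blk_bound k hk2 hkn j.isLt
  have hkb := k_le_blk k (j := (j : ℕ))
  have hidxQ : idx Q v = ((j : ℕ) + 1) * k - 1 := by
    rw [← hj]
    unfold fL
    rw [idx_vtx Q _ (by omega)]
  have hpairQ : pairD Q v = vtx Q (((j : ℕ) + 1) * k) := by
    rw [pairD, hidxQ]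
    congr 1
    omega
  have hedgeQ : s(vtx Q (((j : ℕ) + 1) * k - 1), vtx Q (((j : ℕ) + 1) * k)) ∈ Q.walk.edges := by
    have := crossing_mem Q (((j : ℕ) + 1) * k - 1) (by omega)
    have heq : ((j : ℕ) + 1) * k - 1 + 1 = ((j : ℕ) + 1) * k := by omega
    rwa [heq] at this
  -- rewrite the target edge
  have hvtxp : vtx P p = pairD P v := by
    rw [pairD, hvdef, idx_vtx P (p-1) (by omega)]
    congr 1
    omega
  have hvQeq : vtx Q (((j : ℕ) + 1) * k - 1) = v := by rw [← hj]; rfl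
  rw [hvtxp, htrans, hpairQ, ← hvQeq]
  exact hedgeQ

lemma not_sep (hk2 : 2 ≤ k) (hkn : k ∣ n) (P Q : HamPath n)
    (hc : cmap k P = cmap k Q) (hs : sig k hk2 hkn P = sig k hk2 hkn Q) :
    ¬ SepHam k P Q := by
  rintro ⟨x, y, w, hwp, hwl, hcase⟩
  rcases hcase with ⟨hin, hout⟩ | ⟨hin, hout⟩
  · obtain ⟨p, h1, h2, h3, h4⟩ := key P w hwp k (by omega) hwl hin
    exact hout _ h4 (crossing_subset k hk2 hkn P Q hc hs p h1 h2 h3)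
  · obtain ⟨p, h1, h2, h3, h4⟩ := key Q w hwp k (by omega) hwl hin
    exact hout _ h4 (crossing_subset k hk2 hkn Q P hc.symm hs.symm p h1 h2 h3)

end HamSepAux2

/-- **Theorem 2, upper bound.** For every even `k > 2` and every positive multiple `n`
of `k`, every family `F` of Hamiltonian paths in `K_n` any two distinct members of which
are `k`-separated satisfies `|F| ≤ 3 ^ n * (n/k)!`. -/
theorem hamPath_separated_upper_bound_even (k n : ℕ) (hk : 2 < k) (hke : Even k)
    (hn : 0 < n) (hkn : k ∣ n) (F : Set (HamPath n))
    (hF : ∀ P ∈ F, ∀ Q ∈ F, P ≠ Q → SepHam k P Q) :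
    F.ncard ≤ 3 ^ n * (n / k).factorial := by
  classical
  have hk2 : 2 ≤ k := by omega
  set Φ : HamPath n → ((Fin n → Fin 3) × Equiv.Perm (Fin (n / k - 1))) :=
    fun P => (HamSepAux2.cmap k P, HamSepAux2.sig k hk2 hkn P) with hΦ
  have hinj : Set.InjOn Φ F := by
    intro P hP Q hQ h
    by_contra hne
    have hsep := hF P hP Q hQ hne
    have h1 : HamSepAux2.cmap k P = HamSepAux2.cmap k Q := congrArg Prod.fst h
    have h2 : HamSepAux2.sig k hk2 hkn P = HamSepAux2.sig k hk2 hkn Q := congrArg Prod.snd h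
    exact HamSepAux2.not_sep k hk2 hkn P Q h1 h2 hsep
  have h3 : F.ncard = (Φ '' F).ncard := (Set.ncard_image_of_injOn hinj).symm
  have h4 : (Φ '' F).ncard ≤
      Set.ncard (Set.univ : Set ((Fin n → Fin 3) × Equiv.Perm (Fin (n / k - 1)))) :=
    Set.ncard_le_ncard (Set.subset_univ _) Set.finite_univ
  have h5 : Set.ncard (Set.univ : Set ((Fin n → Fin 3) × Equiv.Perm (Fin (n / k - 1)))) =
      3 ^ n * (n / k - 1).factorial := by
    rw [Set.ncard_univ, Nat.card_eq_fintype_card, Fintype.card_prod, Fintype.card_fun,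
      Fintype.card_perm, Fintype.card_fin, Fintype.card_fin, Fintype.card_fin]
  have h6 : 3 ^ n * (n / k - 1).factorial ≤ 3 ^ n * (n / k).factorial :=
    Nat.mul_le_mul_left _ (Nat.factorial_le (Nat.sub_le _ _))
  omega
end

section
/- Let k ≥ 3 be an odd integer and let n be a positive multiple of k. Then any family F of Hamiltonian paths in the complete graph on the vertex set {1,...,n} such that for any two distinct paths P, Q in F there is a path of k edges which is a subpath of one of P, Q and shares no edge with the other, satisfies |F| ≤ 3^n·(n/k)!. -/
open SimpleGraph

namespace SepAux

/-- Edges of a walk in terms of its support. -/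
lemma walk_edges_getElem {V : Type*} {G : SimpleGraph V} {a b : V} (p : G.Walk a b) :
    ∀ (i : ℕ) (h : i < p.length),
      p.edges[i]'(by rwa [SimpleGraph.Walk.length_edges]) =
        s(p.support[i]'(by rw [SimpleGraph.Walk.length_support]; omega),
          p.support[i+1]'(by rw [SimpleGraph.Walk.length_support]; omega)) := by
  induction p with
  | nil => intro i h; simp at h
  | @cons u c v h' q ih =>
    intro i h
    match i with
    | 0 =>
      simp only [SimpleGraph.Walk.edges_cons, SimpleGraph.Walk.support_cons,
        List.getElem_cons_zero, List.getElem_cons_succ]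
      have h2 : q.support[0]'(by simp [SimpleGraph.Walk.length_support]) = c := by
        rw [List.getElem_eq_iff]
        rw [q.support_eq_cons]
        simp
      rw [h2]
    | (i+1) =>
      simp only [SimpleGraph.Walk.edges_cons, SimpleGraph.Walk.support_cons,
        List.getElem_cons_succ]
      exact ih i (by simpa using h)

/-- The ±1-steps + injectivity ⟹ interval lemma. -/
lemma steps_interval (f : ℕ → ℕ) (K : ℕ)
    (hstep : ∀ t, t + 1 ≤ K → f (t+1) = f t + 1 ∨ f t = f (t+1) + 1)
    (hinj : ∀ t ≤ K, ∀ t' ≤ K, f t = f t' → t = t') :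
    ∃ a, ∀ s ≤ K, ∃ t ≤ K, f t = a + s := by
  rcases Nat.eq_zero_or_pos K with h0 | hK
  · subst h0
    exact ⟨f 0, fun s hs => ⟨0, le_rfl, by omega⟩⟩
  rcases hstep 0 hK with hup | hdown
  · have mono : ∀ t, t + 1 ≤ K → f (t+1) = f t + 1 := by
      intro t
      induction t with
      | zero => intro _; exact hup
      | succ t ih =>
        intro ht
        have h1 := ih (by omega)
        rcases hstep (t+1) ht with h2 | h2
        · exact h2
        · exfalso
          have h3 : f (t+1+1) = f t := by omega
          have := hinj (t+1+1) ht t (by omega) h3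
          omega
    have hval : ∀ t, t ≤ K → f t = f 0 + t := by
      intro t
      induction t with
      | zero => intro _; omega
      | succ t ih =>
        intro ht
        have := mono t ht
        have := ih (by omega)
        omega
    exact ⟨f 0, fun s hs => ⟨s, hs, hval s hs⟩⟩
  · have mono : ∀ t, t + 1 ≤ K → f t = f (t+1) + 1 := by
      intro t
      induction t with
      | zero => intro _; exact hdown
      | succ t ih =>
        intro ht
        have h1 := ih (by omega)
        rcases hstep (t+1) ht with h2 | h2
        · exfalso
          have h3 : f (t+1+1) = f t := by omega
          have := hinj (t+1+1) ht t (by omega) h3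
          omega
        · exact h2
    have hval : ∀ t, t ≤ K → f t + t = f 0 := by
      intro t
      induction t with
      | zero => intro _; omega
      | succ t ih =>
        intro ht
        have := mono t ht
        have := ih (by omega)
        omega
    refine ⟨f K, fun s hs => ⟨K - s, by omega, ?_⟩⟩
    have h1 := hval (K - s) (by omega)
    have h2 := hval K le_rfl
    omega

end SepAux

namespace SepAux

variable {n : ℕ}

/-- support list of a Hamiltonian path -/
def sp (P : HamPath n) : List (Fin n) := P.walk.support

/-- position of a vertex (0-based) -/
def posn (P : HamPath n) (v : Fin n) : ℕ := List.idxOf v (sp P)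

/-- the vertex following `v` on `P` (junk if `v` is last) -/
def nxt (P : HamPath n) (v : Fin n) : Fin n := (sp P).getD (posn P v + 1) v

lemma sp_nodup (P : HamPath n) : (sp P).Nodup :=
  List.nodup_iff_count_le_one.2 (fun v => le_of_eq (P.isHamiltonian v))

lemma sp_mem (P : HamPath n) (v : Fin n) : v ∈ sp P :=
  List.count_pos_iff.1 (by unfold sp; rw [P.isHamiltonian v]; norm_num)

lemma sp_length (P : HamPath n) (hn : 0 < n) : (sp P).length = n := by
  have h1 := P.walk.length_support
  have h2 := P.isHamiltonian.length_eq
  simp only [Fintype.card_fin] at h2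
  unfold sp
  omega

lemma posn_lt (P : HamPath n) (hn : 0 < n) (v : Fin n) : posn P v < n := by
  have h := List.idxOf_lt_length_iff.2 (sp_mem P v)
  rwa [sp_length P hn] at h

lemma sp_getElem_posn (P : HamPath n) (hn : 0 < n) (v : Fin n) :
    (sp P)[posn P v]'(by rw [sp_length P hn]; exact posn_lt P hn v) = v :=
  List.getElem_idxOf _

lemma posn_sp_getElem (P : HamPath n) (hn : 0 < n) (i : ℕ) (hi : i < n) :
    posn P ((sp P)[i]'(by rwa [sp_length P hn])) = i :=
  List.Nodup.idxOf_getElem (sp_nodup P) i _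

lemma posn_inj (P : HamPath n) (hn : 0 < n) {v w : Fin n} (h : posn P v = posn P w) : v = w := by
  rw [← sp_getElem_posn P hn v, ← sp_getElem_posn P hn w]
  congr 1

lemma walk_isPath (P : HamPath n) : P.walk.IsPath := by
  rw [SimpleGraph.Walk.isPath_def]; exact sp_nodup P

lemma edges_length (P : HamPath n) (hn : 0 < n) : P.walk.edges.length = n - 1 := by
  have h1 := P.walk.length_edges
  have h2 := P.isHamiltonian.length_eq
  simp only [Fintype.card_fin] at h2
  omega

lemma edges_nodup (P : HamPath n) : P.walk.edges.Nodup := (walk_isPath P).edges_nodup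

lemma edges_getElem (P : HamPath n) (hn : 0 < n) (i : ℕ) (hi : i < n - 1) :
    P.walk.edges[i]'(by rwa [edges_length P hn]) =
      s((sp P)[i]'(by rw [sp_length P hn]; omega),
        (sp P)[i+1]'(by rw [sp_length P hn]; omega)) := by
  have h2 := P.isHamiltonian.length_eq
  simp only [Fintype.card_fin] at h2
  exact walk_edges_getElem P.walk i (by omega)

lemma nxt_eq (P : HamPath n) (hn : 0 < n) (v : Fin n) (h : posn P v + 1 < n) :
    nxt P v = (sp P)[posn P v + 1]'(by rwa [sp_length P hn]) := by
  unfold nxt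
  exact List.getD_eq_getElem _ _ (by rwa [sp_length P hn])

lemma posn_nxt (P : HamPath n) (hn : 0 < n) (v : Fin n) (h : posn P v + 1 < n) :
    posn P (nxt P v) = posn P v + 1 := by
  rw [nxt_eq P hn v h]
  exact posn_sp_getElem P hn _ h

end SepAux

namespace SepAux

variable {n k : ℕ}

/-- 3-coloring: 1 = left end of a cut edge, 2 = right end, 0 = other. -/
def label (k : ℕ) (P : HamPath n) : Fin n → Fin 3 := fun v =>
  if posn P v % k = k - 1 ∧ posn P v + 1 ≠ n then 1
  else if posn P v % k = 0 ∧ posn P v ≠ 0 then 2 else 0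

def Lset (ℓ : Fin n → Fin 3) : Finset (Fin n) := Finset.univ.filter (fun v => ℓ v = 1)
def Rset (ℓ : Fin n → Fin 3) : Finset (Fin n) := Finset.univ.filter (fun v => ℓ v = 2)

lemma mem_Lset {ℓ : Fin n → Fin 3} {v : Fin n} : v ∈ Lset ℓ ↔ ℓ v = 1 := by
  simp [Lset]

lemma mem_Rset {ℓ : Fin n → Fin 3} {v : Fin n} : v ∈ Rset ℓ ↔ ℓ v = 2 := by
  simp [Rset]

lemma label_eq_one_iff {P : HamPath n} {v : Fin n} :
    label k P v = 1 ↔ (posn P v % k = k - 1 ∧ posn P v + 1 ≠ n) := by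
  unfold label
  split_ifs with h1 h2
  · simpa using h1
  · simp only [show (2 : Fin 3) ≠ 1 by decide, false_iff]; exact h1
  · simp only [show (0 : Fin 3) ≠ 1 by decide, false_iff]; exact h1

lemma label_eq_two_iff (hk : 3 ≤ k) {P : HamPath n} {v : Fin n} :
    label k P v = 2 ↔ (posn P v % k = 0 ∧ posn P v ≠ 0) := by
  unfold label
  split_ifs with h1 h2
  · simp only [show (1 : Fin 3) ≠ 2 by decide, false_iff]
    intro h
    omega
  · simpa using h2
  · simp only [show (0 : Fin 3) ≠ 2 by decide, false_iff]; exact h2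

lemma card_Lset (hk : 3 ≤ k) (hn : 0 < n) (hkn : k ∣ n) (P : HamPath n) :
    (Lset (label k P)).card = n / k - 1 := by
  have hkm : k * (n / k) = n := Nat.mul_div_cancel' hkn
  set m := n / k with hm
  have hm1 : 1 ≤ m := by
    rcases Nat.eq_zero_or_pos m with h | h
    · rw [h, Nat.mul_zero] at hkm; omega
    · exact h
  rw [show m - 1 = (Finset.range (m-1)).card by simp]
  refine Finset.card_bij' (fun v _ => posn P v / k)
    (fun q hq => (sp P)[k * q + (k-1)]'(by
      have hq' : q < m - 1 := Finset.mem_range.1 hq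
      have a1 : k * (q+1) ≤ k * (m-1) := Nat.mul_le_mul_left k (by omega)
      have a2 : k * (m-1) + k = k * m := by rw [← Nat.mul_succ]; congr 1; omega
      have a3 : k * q + k = k * (q+1) := (Nat.mul_succ k q).symm
      rw [sp_length P hn]; omega)) ?_ ?_ ?_ ?_
  · intro v hv
    obtain ⟨hv1, hv2⟩ := label_eq_one_iff.1 (mem_Lset.1 hv)
    have e1 := Nat.div_add_mod (posn P v) k
    have hlt := posn_lt P hn v
    have a3 : k * (posn P v / k) + k = k * (posn P v / k + 1) := (Nat.mul_succ k _).symm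
    have a4 : k * (posn P v / k + 1) < k * m := by omega
    have a5 : posn P v / k + 1 < m := Nat.lt_of_mul_lt_mul_left a4
    exact Finset.mem_range.2 (by omega)
  · intro q hq
    have hq' : q < m - 1 := Finset.mem_range.1 hq
    have a1 : k * (q+1) ≤ k * (m-1) := Nat.mul_le_mul_left k (by omega)
    have a2 : k * (m-1) + k = k * m := by rw [← Nat.mul_succ]; congr 1; omega
    have a3 : k * q + k = k * (q+1) := (Nat.mul_succ k q).symm
    have hidx : k * q + (k-1) < n := by omega
    rw [mem_Lset, label_eq_one_iff, posn_sp_getElem P hn _ hidx]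
    constructor
    · rw [Nat.mul_add_mod]; exact Nat.mod_eq_of_lt (by omega)
    · omega
  · intro v hv
    obtain ⟨hv1, hv2⟩ := label_eq_one_iff.1 (mem_Lset.1 hv)
    have e1 := Nat.div_add_mod (posn P v) k
    have hlt := posn_lt P hn v
    apply posn_inj P hn
    rw [posn_sp_getElem P hn _ (by omega)]
    omega
  · intro q hq
    have hq' : q < m - 1 := Finset.mem_range.1 hq
    have a1 : k * (q+1) ≤ k * (m-1) := Nat.mul_le_mul_left k (by omega)
    have a2 : k * (m-1) + k = k * m := by rw [← Nat.mul_succ]; congr 1; omega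
    have a3 : k * q + k = k * (q+1) := (Nat.mul_succ k q).symm
    have hidx : k * q + (k-1) < n := by omega
    rw [posn_sp_getElem P hn _ hidx, Nat.mul_add_div (by omega : 0 < k),
      Nat.div_eq_of_lt (by omega : k - 1 < k)]
    omega

end SepAux

namespace SepAux

variable {n k : ℕ}

lemma card_Rset (hk : 3 ≤ k) (hn : 0 < n) (hkn : k ∣ n) (P : HamPath n) :
    (Rset (label k P)).card = n / k - 1 := by
  have hkm : k * (n / k) = n := Nat.mul_div_cancel' hkn
  set m := n / k with hm
  have hm1 : 1 ≤ m := by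
    rcases Nat.eq_zero_or_pos m with h | h
    · rw [h, Nat.mul_zero] at hkm; omega
    · exact h
  rw [show m - 1 = (Finset.range (m-1)).card by simp]
  refine Finset.card_bij' (fun v _ => posn P v / k - 1)
    (fun q hq => (sp P)[k * (q + 1)]'(by
      have hq' : q < m - 1 := Finset.mem_range.1 hq
      have a1 : k * (q+1) ≤ k * (m-1) := Nat.mul_le_mul_left k (by omega)
      have a2 : k * (m-1) + k = k * m := by rw [← Nat.mul_succ]; congr 1; omega
      rw [sp_length P hn]; omega)) ?_ ?_ ?_ ?_
  · intro v hv
    obtain ⟨hv1, hv2⟩ := (label_eq_two_iff hk).1 (mem_Rset.1 hv)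
    have e1 := Nat.div_add_mod (posn P v) k
    have hlt := posn_lt P hn v
    have hq1 : 1 ≤ posn P v / k := by
      rcases Nat.eq_zero_or_pos (posn P v / k) with h | h
      · rw [h, Nat.mul_zero] at e1; omega
      · exact h
    have a3 : k * (posn P v / k) < k * m := by omega
    have a5 : posn P v / k < m := Nat.lt_of_mul_lt_mul_left a3
    exact Finset.mem_range.2 (by omega)
  · intro q hq
    have hq' : q < m - 1 := Finset.mem_range.1 hq
    have a1 : k * (q+1) ≤ k * (m-1) := Nat.mul_le_mul_left k (by omega)
    have a2 : k * (m-1) + k = k * m := by rw [← Nat.mul_succ]; congr 1; omega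
    have hidx : k * (q + 1) < n := by omega
    rw [mem_Rset, label_eq_two_iff hk, posn_sp_getElem P hn _ hidx]
    constructor
    · exact Nat.mul_mod_right k (q+1)
    · have : 0 < k * (q+1) := Nat.mul_pos (by omega) (Nat.zero_lt_succ _)
      omega
  · intro v hv
    obtain ⟨hv1, hv2⟩ := (label_eq_two_iff hk).1 (mem_Rset.1 hv)
    have e1 := Nat.div_add_mod (posn P v) k
    have hlt := posn_lt P hn v
    have hq1 : 1 ≤ posn P v / k := by
      rcases Nat.eq_zero_or_pos (posn P v / k) with h | h
      · rw [h, Nat.mul_zero] at e1; omega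
      · exact h
    have a4 : posn P v / k - 1 + 1 = posn P v / k := by omega
    apply posn_inj P hn
    rw [posn_sp_getElem P hn _ (by rw [a4]; omega), a4]
    omega
  · intro q hq
    have hq' : q < m - 1 := Finset.mem_range.1 hq
    have a1 : k * (q+1) ≤ k * (m-1) := Nat.mul_le_mul_left k (by omega)
    have a2 : k * (m-1) + k = k * m := by rw [← Nat.mul_succ]; congr 1; omega
    have hidx : k * (q + 1) < n := by omega
    rw [posn_sp_getElem P hn _ hidx, Nat.mul_div_cancel_left _ (by omega : 0 < k)]
    omega

end SepAux

namespace SepAux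

variable {n k : ℕ}

def cond (k : ℕ) (ℓ : Fin n → Fin 3) (P : HamPath n) : Prop :=
  (Lset ℓ).card = n / k - 1 ∧ (Rset ℓ).card = n / k - 1 ∧
  (∀ v ∈ Lset ℓ, nxt P v ∈ Rset ℓ) ∧
  ∀ v ∈ Lset ℓ, ∀ w ∈ Lset ℓ, nxt P v = nxt P w → v = w

lemma posn_add_one_lt {P : HamPath n} {v : Fin n} (hn : 0 < n)
    (hv : v ∈ Lset (label k P)) : posn P v + 1 < n := by
  obtain ⟨hv1, hv2⟩ := label_eq_one_iff.1 (mem_Lset.1 hv)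
  have := posn_lt P hn v
  omega

lemma cond_label (hk : 3 ≤ k) (hn : 0 < n) (hkn : k ∣ n) (P : HamPath n) :
    cond k (label k P) P := by
  refine ⟨card_Lset hk hn hkn P, card_Rset hk hn hkn P, ?_, ?_⟩
  · intro v hv
    obtain ⟨hv1, hv2⟩ := label_eq_one_iff.1 (mem_Lset.1 hv)
    have hlt := posn_add_one_lt hn hv
    have hpn := posn_nxt P hn v hlt
    rw [mem_Rset, label_eq_two_iff hk, hpn]
    have e1 := Nat.div_add_mod (posn P v) k
    have a3 : k * (posn P v / k) + k = k * (posn P v / k + 1) := (Nat.mul_succ k _).symm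
    have a4 : posn P v + 1 = k * (posn P v / k + 1) := by
      rw [Nat.mul_succ]
      conv_lhs => rw [← e1, hv1]
      rw [add_assoc]
      congr 1
      omega
    rw [a4]
    exact ⟨Nat.mul_mod_right _ _, by
      have : 0 < k * (posn P v / k + 1) := Nat.mul_pos (by omega) (Nat.zero_lt_succ _)
      omega⟩
  · intro v hv w hw hvw
    have h1 := posn_nxt P hn v (posn_add_one_lt hn hv)
    have h2 := posn_nxt P hn w (posn_add_one_lt hn hw)
    apply posn_inj P hn
    rw [hvw] at h1
    omega

open scoped Classical in
/-- The permutation of `Fin (n/k)` encoding the pairing of cut-edge endpoints. -/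
noncomputable def mkPerm (k : ℕ) (ℓ : Fin n → Fin 3) (P : HamPath n) :
    Equiv.Perm (Fin (n / k)) :=
  if h : cond k ℓ P then
    Equiv.Perm.viaFintypeEmbedding
    ((((Lset ℓ).orderIsoOfFin h.1).toEquiv.trans
      (Equiv.ofBijective
        (fun v => (⟨nxt P v.1, h.2.2.1 v.1 v.2⟩ : {x // x ∈ Rset ℓ}))
        (by
          rw [Fintype.bijective_iff_injective_and_card]
          refine ⟨?_, ?_⟩
          · intro a b hab
            exact Subtype.ext (h.2.2.2 a.1 a.2 b.1 b.2 (congrArg Subtype.val hab))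
          · simp only [Fintype.card_coe, h.1, h.2.1]))).trans
      ((Rset ℓ).orderIsoOfFin h.2.1).toEquiv.symm)
      (Fin.castLEEmb (Nat.sub_le _ 1))
  else 1

lemma nxt_eq_of_mkPerm_eq {ℓ : Fin n → Fin 3} {P Q : HamPath n}
    (hP : cond k ℓ P) (hQ : cond k ℓ Q)
    (h : mkPerm k ℓ P = mkPerm k ℓ Q) :
    ∀ v ∈ Lset ℓ, nxt P v = nxt Q v := by
  intro v hv
  rw [mkPerm, dif_pos hP, mkPerm, dif_pos hQ] at h
  set eL := ((Lset ℓ).orderIsoOfFin hP.1) with heL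
  set eR := ((Rset ℓ).orderIsoOfFin hP.2.1) with heR
  set i : Fin (n / k - 1) := eL.toEquiv.symm ⟨v, hv⟩ with hi
  have h2 := DFunLike.congr_fun h ((Fin.castLEEmb (Nat.sub_le (n/k) 1)) i)
  rw [Equiv.Perm.viaFintypeEmbedding_apply_image,
      Equiv.Perm.viaFintypeEmbedding_apply_image] at h2
  have h3 := (Fin.castLEEmb (Nat.sub_le (n/k) 1)).injective h2
  simp only [Equiv.trans_apply, Equiv.ofBijective_apply, hi,
    Equiv.apply_symm_apply] at h3
  have h4 := eR.toEquiv.symm.injective h3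
  exact congrArg Subtype.val h4

/-- The set of cut edges. -/
def cutE (k : ℕ) (ℓ : Fin n → Fin 3) (P : HamPath n) : Finset (Sym2 (Fin n)) :=
  (Lset ℓ).image (fun v => s(v, nxt P v))

lemma cutE_subset_edges (hn : 0 < n) (P : HamPath n) :
    ∀ e ∈ cutE k (label k P) P, e ∈ P.walk.edges := by
  intro e he
  obtain ⟨v, hv, rfl⟩ := Finset.mem_image.1 he
  have hlt := posn_add_one_lt hn hv
  have hE : posn P v < n - 1 := by omega
  have h1 := edges_getElem P hn (posn P v) hE
  rw [sp_getElem_posn P hn v, ← nxt_eq P hn v hlt] at h1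
  rw [← h1]
  exact List.getElem_mem _

end SepAux

namespace SepAux

variable {n k : ℕ}

lemma exists_cut_mem (hk : 3 ≤ k) (hn : 0 < n) (hkn : k ∣ n) (P : HamPath n)
    {x y : Fin n} (W : (⊤ : SimpleGraph (Fin n)).Walk x y) (hWp : W.IsPath) (hWl : W.length = k)
    (hsub : ∀ e ∈ W.edges, e ∈ P.walk.edges) :
    ∃ e ∈ cutE k (label k P) P, e ∈ W.edges := by
  classical
  have hElen : P.walk.edges.length = n - 1 := edges_length P hn
  have hEnd : P.walk.edges.Nodup := edges_nodup P
  have hWlen : W.edges.length = k := by rw [W.length_edges, hWl]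
  have hWnd : W.edges.Nodup := hWp.edges_nodup
  have hWs : W.support.length = k + 1 := by rw [W.length_support, hWl]
  set d : Sym2 (Fin n) := s(x, x) with hd
  set f : ℕ → ℕ := fun t => List.idxOf (W.edges.getD t d) P.walk.edges with hf
  have idx_inj : ∀ (a b : Sym2 (Fin n)), a ∈ P.walk.edges → b ∈ P.walk.edges →
      List.idxOf a P.walk.edges = List.idxOf b P.walk.edges → a = b := by
    intro a b ha hb hab
    have h1 : P.walk.edges.getD (List.idxOf a P.walk.edges) d = a := by
      rw [List.getD_eq_getElem _ _ (List.idxOf_lt_length_iff.2 ha)]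
      exact List.getElem_idxOf _
    have h2 : P.walk.edges.getD (List.idxOf b P.walk.edges) d = b := by
      rw [List.getD_eq_getElem _ _ (List.idxOf_lt_length_iff.2 hb)]
      exact List.getElem_idxOf _
    rw [hab] at h1
    exact h1.symm.trans h2
  have hmemW : ∀ t (ht : t < k), W.edges.getD t d = W.edges[t]'(by rw [hWlen]; exact ht) :=
    fun t ht => List.getD_eq_getElem _ _ _
  have hfmem : ∀ t, t < k → W.edges.getD t d ∈ P.walk.edges := fun t ht =>
    hsub _ (by rw [hmemW t ht]; exact List.getElem_mem _)
  have hflt : ∀ t, t < k → f t < n - 1 := fun t ht => by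
    have h := List.idxOf_lt_length_iff.2 (hfmem t ht)
    rwa [hElen] at h
  have hfE : ∀ t (ht : t < k), P.walk.edges[f t]'(by rw [hElen]; exact hflt t ht) =
      W.edges.getD t d := fun t ht => List.getElem_idxOf _
  have hinj : ∀ t, t < k → ∀ t', t' < k → f t = f t' → t = t' := by
    intro t ht t' ht' hft
    have h1 := idx_inj _ _ (hfmem t ht) (hfmem t' ht') hft
    rw [hmemW t ht, hmemW t' ht'] at h1
    exact (hWnd.getElem_inj_iff).1 h1
  have pos_eq : ∀ (w : Fin n) (i : ℕ) (hi : i < n),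
      w = (sp P)[i]'(by rw [sp_length P hn]; exact hi) → posn P w = i := by
    intro w i hi hw
    rw [hw]
    exact posn_sp_getElem P hn i hi
  have hWedge : ∀ t (ht : t < k), W.edges[t]'(by rw [hWlen]; exact ht) =
      s(W.support[t]'(by rw [hWs]; omega), W.support[t+1]'(by rw [hWs]; omega)) := by
    intro t ht
    exact walk_edges_getElem W t (by omega)
  have hPedge : ∀ j (hj : j < n - 1), P.walk.edges[j]'(by rw [hElen]; exact hj) =
      s((sp P)[j]'(by rw [sp_length P hn]; omega),
        (sp P)[j+1]'(by rw [sp_length P hn]; omega)) :=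
    fun j hj => edges_getElem P hn j hj
  have hstep : ∀ t, t + 1 < k → (f (t+1) = f t + 1 ∨ f t = f (t+1) + 1) := by
    intro t ht
    have e1 : s(W.support[t]'(by rw [hWs]; omega), W.support[t+1]'(by rw [hWs]; omega)) =
        s((sp P)[f t]'(by rw [sp_length P hn]; have := hflt t (by omega); omega),
          (sp P)[f t + 1]'(by rw [sp_length P hn]; have := hflt t (by omega); omega)) := by
      rw [← hWedge t (by omega), ← hmemW t (by omega), ← hfE t (by omega)]
      exact hPedge (f t) (hflt t (by omega))
    have e2 : s(W.support[t+1]'(by rw [hWs]; omega), W.support[t+2]'(by rw [hWs]; omega)) =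
        s((sp P)[f (t+1)]'(by rw [sp_length P hn]; have := hflt (t+1) ht; omega),
          (sp P)[f (t+1) + 1]'(by rw [sp_length P hn]; have := hflt (t+1) ht; omega)) := by
      rw [← hWedge (t+1) ht, ← hmemW (t+1) ht, ← hfE (t+1) ht]
      exact hPedge (f (t+1)) (hflt (t+1) ht)
    have hne : f t ≠ f (t+1) := fun h => by
      have := hinj t (by omega) (t+1) ht h
      omega
    have hb1 : f t < n - 1 := hflt t (by omega)
    have hb2 : f (t+1) < n - 1 := hflt (t+1) ht
    rcases Sym2.eq_iff.1 e1 with ⟨h1a, h1b⟩ | ⟨h1a, h1b⟩ <;>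
      rcases Sym2.eq_iff.1 e2 with ⟨h2a, h2b⟩ | ⟨h2a, h2b⟩
    · have hab := (pos_eq _ (f t + 1) (by omega) h1b).symm.trans
        (pos_eq _ (f (t+1)) (by omega) h2a)
      omega
    · have hab := (pos_eq _ (f t + 1) (by omega) h1b).symm.trans
        (pos_eq _ (f (t+1) + 1) (by omega) h2a)
      omega
    · have hab := (pos_eq _ (f t) (by omega) h1b).symm.trans
        (pos_eq _ (f (t+1)) (by omega) h2a)
      omega
    · have hab := (pos_eq _ (f t) (by omega) h1b).symm.trans
        (pos_eq _ (f (t+1) + 1) (by omega) h2a)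
      omega
  obtain ⟨a, ha⟩ := steps_interval f (k-1) (fun t ht => hstep t (by omega))
    (fun t ht t' ht' h => hinj t (by omega) t' (by omega) h)
  have hak : a % k < k := Nat.mod_lt _ (by omega)
  obtain ⟨t, htK, hft⟩ := ha (k - 1 - a % k) (by omega)
  set j := a + (k - 1 - a % k) with hj
  have hjmod : j % k = k - 1 := by
    have e := Nat.div_add_mod a k
    have hjj : j = k * (a / k) + (k - 1) := by omega
    rw [hjj, Nat.mul_add_mod]
    exact Nat.mod_eq_of_lt (by omega)
  have hjlt : j < n - 1 := by
    have := hflt t (by omega)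
    omega
  have hjn : j < n := by omega
  set v := (sp P)[j]'(by rw [sp_length P hn]; exact hjn) with hv
  have hpv : posn P v = j := posn_sp_getElem P hn j hjn
  have hvL : v ∈ Lset (label k P) :=
    mem_Lset.2 (label_eq_one_iff.2 ⟨by rw [hpv]; exact hjmod, by rw [hpv]; omega⟩)
  refine ⟨s(v, nxt P v), Finset.mem_image.2 ⟨v, hvL, rfl⟩, ?_⟩
  have hnv_lt : posn P v + 1 < n := by rw [hpv]; omega
  have hnveq : nxt P v = (sp P)[j+1]'(by rw [sp_length P hn]; omega) := by
    apply posn_inj P hn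
    rw [posn_nxt P hn v hnv_lt, posn_sp_getElem P hn (j+1) (by omega), hpv]
  have heq : s(v, nxt P v) = P.walk.edges[j]'(by rw [hElen]; exact hjlt) := by
    rw [hPedge j hjlt, ← hnveq]
  -- index of our edge is j, which equals f t
  have hidx1 : List.idxOf (s(v, nxt P v)) P.walk.edges = j := by
    rw [heq]
    exact List.Nodup.idxOf_getElem hEnd j _
  have hmemP : s(v, nxt P v) ∈ P.walk.edges := by
    rw [heq]
    exact List.getElem_mem _
  have hfj : f t = j := by omega
  have : s(v, nxt P v) = W.edges.getD t d :=
    idx_inj _ _ hmemP (hfmem t (by omega)) (by rw [hidx1, ← hfj])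
  rw [this, hmemW t (by omega)]
  exact List.getElem_mem _

end SepAux


/-- **Theorem 3, upper bound.** For every odd `k ≥ 3` and every positive multiple `n`
of `k`, every family `F` of Hamiltonian paths in `K_n` any two distinct members of which
are `k`-separated satisfies `|F| ≤ 3 ^ n * (n/k)!`. -/
theorem hamPath_separated_upper_bound_odd (k n : ℕ) (hk : 3 ≤ k) (hko : Odd k)
    (hn : 0 < n) (hkn : k ∣ n) (F : Set (HamPath n))
    (hF : ∀ P ∈ F, ∀ Q ∈ F, P ≠ Q → SepHam k P Q) :
    F.ncard ≤ 3 ^ n * (n / k).factorial := by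
  classical
  have hinj : Set.InjOn
      (fun P : HamPath n => (SepAux.label k P, SepAux.mkPerm k (SepAux.label k P) P)) F := by
    intro P hP Q hQ hPQ
    by_contra hne
    have hl : SepAux.label k P = SepAux.label k Q := congrArg Prod.fst hPQ
    have hperm := congrArg Prod.snd hPQ
    simp only at hperm hl
    have hcondP := SepAux.cond_label hk hn hkn P
    have hcondQ : SepAux.cond k (SepAux.label k P) Q := by
      rw [hl]; exact SepAux.cond_label hk hn hkn Q
    have hperm' : SepAux.mkPerm k (SepAux.label k P) P
        = SepAux.mkPerm k (SepAux.label k P) Q := by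
      rw [← hl] at hperm
      exact hperm
    have hnxt := SepAux.nxt_eq_of_mkPerm_eq hcondP hcondQ hperm'
    have hcut : SepAux.cutE k (SepAux.label k P) P = SepAux.cutE k (SepAux.label k P) Q :=
      Finset.image_congr (fun v hv => by rw [hnxt v (Finset.mem_coe.1 hv)])
    obtain ⟨a, b, Wk, hWp, hWl, hcase⟩ := (hF P hP Q hQ hne : SepWalks k P.walk Q.walk)
    rcases hcase with ⟨hsubP, hdisQ⟩ | ⟨hsubQ, hdisP⟩
    · obtain ⟨e, heC, heW⟩ := SepAux.exists_cut_mem hk hn hkn P Wk hWp hWl hsubP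
      have heQ : e ∈ SepAux.cutE k (SepAux.label k Q) Q := by
        rw [← hl, ← hcut]; exact heC
      exact hdisQ e heW (SepAux.cutE_subset_edges hn Q e heQ)
    · obtain ⟨e, heC, heW⟩ := SepAux.exists_cut_mem hk hn hkn Q Wk hWp hWl hsubQ
      have heP : e ∈ SepAux.cutE k (SepAux.label k P) P := by
        rw [hcut, hl]; exact heC
      exact hdisP e heW (SepAux.cutE_subset_edges hn P e heP)
  calc F.ncard
      = ((fun P : HamPath n =>
          (SepAux.label k P, SepAux.mkPerm k (SepAux.label k P) P)) '' F).ncard :=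
        (Set.ncard_image_of_injOn hinj).symm
    _ ≤ (Set.univ : Set ((Fin n → Fin 3) × Equiv.Perm (Fin (n/k)))).ncard :=
        Set.ncard_le_ncard (Set.subset_univ _) Set.finite_univ
    _ = 3 ^ n * (n / k).factorial := by
        rw [Set.ncard_univ, Nat.card_eq_fintype_card, Fintype.card_prod, Fintype.card_fun,
          Fintype.card_perm]
        simp
end

section
/- Let n be an even positive integer and let P and Q be two Hamiltonian paths in the complete graph on the vertex set {1,...,n} whose edge sets contain a common perfect matching M. Then there is no path of 2 edges which is a subpath of one of P, Q and shares no edge with the other. -/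
open SimpleGraph

/-- `M` is a perfect matching of the complete graph on `Fin n`, viewed as a set of
edges: every edge is a genuine (non-loop) edge, and every vertex lies in exactly one
edge of `M`. -/
def IsPerfectMatchingOn (n : ℕ) (M : Set (Sym2 (Fin n))) : Prop :=
  (∀ e ∈ M, ¬ e.IsDiag) ∧ (∀ v : Fin n, ∃! e, e ∈ M ∧ v ∈ e)

private lemma mem_support_of_mem_edge {V : Type*} [DecidableEq V] {G : SimpleGraph V} {u v c : V}
    (p : G.Walk u v) {e : Sym2 V} (he : e ∈ p.edges) (hce : c ∈ e) : c ∈ p.support := by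
  induction e using Sym2.ind with
  | _ x y =>
    rcases Sym2.mem_iff.mp hce with rfl | rfl
    · exact p.fst_mem_support_of_mem_edges he
    · exact p.snd_mem_support_of_mem_edges he

private lemma countP_edges_of_not_mem_support {V : Type*} [DecidableEq V] {G : SimpleGraph V} {u v c : V}
    (p : G.Walk u v) (hc : c ∉ p.support) :
    p.edges.countP (fun e => decide (c ∈ e)) = 0 :=
  List.countP_eq_zero.2 fun e he hce =>
    hc (mem_support_of_mem_edge p he (by simpa using hce))

private lemma countP_edges_start {V : Type*} [DecidableEq V] {G : SimpleGraph V} {u v : V}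
    (p : G.Walk u v) (hp : p.IsPath) :
    p.edges.countP (fun e => decide (u ∈ e)) ≤ 1 := by
  cases p with
  | nil => simp
  | cons h q =>
    rw [SimpleGraph.Walk.cons_isPath_iff] at hp
    rw [SimpleGraph.Walk.edges_cons, List.countP_cons,
      countP_edges_of_not_mem_support q hp.2]
    split <;> simp

private lemma countP_edges_le_two {V : Type*} [DecidableEq V] {G : SimpleGraph V} {u v : V}
    (p : G.Walk u v) (hp : p.IsPath) (c : V) :
    p.edges.countP (fun e => decide (c ∈ e)) ≤ 2 := by
  induction p with
  | nil => simp
  | cons h q ih =>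
    rw [SimpleGraph.Walk.cons_isPath_iff] at hp
    rename_i a b d
    rw [SimpleGraph.Walk.edges_cons, List.countP_cons]
    by_cases hc : c ∈ s(a, b)
    · rcases Sym2.mem_iff.mp hc with rfl | rfl
      · rw [countP_edges_of_not_mem_support q hp.2]
        simp [hc]
      · have := countP_edges_start q hp.1
        simp only [hc, decide_true, if_pos, eq_self_iff_true]
        simp
        omega
    · simpa [hc] using ih hp.1

/-- Key lemma: a path contains at most two edges through any given vertex. -/
private lemma three_edges_absurd {V : Type*} [DecidableEq V] {G : SimpleGraph V} {u v c : V}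
    (p : G.Walk u v) (hp : p.IsPath) {e1 e2 e3 : Sym2 V}
    (h1 : e1 ∈ p.edges) (h2 : e2 ∈ p.edges) (h3 : e3 ∈ p.edges)
    (hc1 : c ∈ e1) (hc2 : c ∈ e2) (hc3 : c ∈ e3)
    (h12 : e1 ≠ e2) (h13 : e1 ≠ e3) (h23 : e2 ≠ e3) : False := by
  have hsub : ({e1, e2, e3} : Finset (Sym2 V)) ⊆
      (p.edges.filter (fun e => decide (c ∈ e))).toFinset := by
    intro e he
    simp only [Finset.mem_insert, Finset.mem_singleton] at he
    rcases he with rfl | rfl | rfl <;>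
      simp_all [List.mem_toFinset, List.mem_filter]
  have hcard : ({e1, e2, e3} : Finset (Sym2 V)).card = 3 := by
    rw [Finset.card_insert_of_notMem (by simp [h12, h13]),
      Finset.card_insert_of_notMem (by simp [h23])]
    simp
  have hle := Finset.card_le_card hsub
  have hnd : (p.edges.filter (fun e => decide (c ∈ e))).Nodup :=
    hp.isTrail.edges_nodup.filter _
  rw [List.toFinset_card_of_nodup hnd] at hle
  have := countP_edges_le_two p hp c
  rw [List.countP_eq_length_filter] at this
  omega

/-- **Paths sharing a perfect matching are not 2-separated.** For even `n > 0`, if the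
edge sets of two Hamiltonian paths `P`, `Q` of `K_n` both contain a perfect matching
`M`, then there is no path of `2` edges which is a subpath of one of `P`, `Q` (i.e. all
of whose edges are edges of it) and shares no edge with the other. -/
theorem no_two_separation_of_common_perfectMatching (n : ℕ) (hn : 0 < n) (hne : Even n)
    {u v x y : Fin n}
    (P : (⊤ : SimpleGraph (Fin n)).Walk u v) (Q : (⊤ : SimpleGraph (Fin n)).Walk x y)
    (hP : P.IsHamiltonian) (hQ : Q.IsHamiltonian)
    (M : Set (Sym2 (Fin n))) (hM : IsPerfectMatchingOn n M)
    (hMP : ∀ e ∈ M, e ∈ P.edges) (hMQ : ∀ e ∈ M, e ∈ Q.edges) :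
    ¬ ∃ (a b : Fin n) (w : (⊤ : SimpleGraph (Fin n)).Walk a b),
        w.IsPath ∧ w.length = 2 ∧
        (((∀ e ∈ w.edges, e ∈ P.edges) ∧ (∀ e ∈ w.edges, e ∉ Q.edges)) ∨
         ((∀ e ∈ w.edges, e ∈ Q.edges) ∧ (∀ e ∈ w.edges, e ∉ P.edges))) := by
  rintro ⟨a, b, w, hw, hlen, hcase⟩
  -- decompose w into its two edges
  cases w with
  | nil => simp at hlen
  | cons h1 w' =>
    cases w' with
    | nil => simp at hlen
    | cons h2 w'' =>
      cases w'' with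
      | nil =>
        rename_i c
        -- edges are s(a, c) and s(c, b)
        have hedges : (SimpleGraph.Walk.cons h1 (SimpleGraph.Walk.cons h2
            SimpleGraph.Walk.nil)).edges = [s(a, c), s(c, b)] := by simp
        have hne12 : s(a, c) ≠ s(c, b) := by
          have := hw.isTrail.edges_nodup
          rw [hedges] at this
          simpa using (List.nodup_cons.mp this).1
        obtain ⟨e, ⟨heM, hce⟩, _⟩ := hM.2 c
        have key : ∀ {s t : Fin n} (R : (⊤ : SimpleGraph (Fin n)).Walk s t),
            R.IsHamiltonian →
            (∀ f ∈ M, f ∈ R.edges) →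
            (s(a, c) ∈ R.edges) → (s(c, b) ∈ R.edges) →
            e = s(a, c) ∨ e = s(c, b) := by
          intro s t R hR hMR hm1 hm2
          by_contra hcon
          push_neg at hcon
          exact three_edges_absurd R hR.isPath (hMR e heM) hm1 hm2 hce
            (Sym2.mem_mk_right a c) (Sym2.mem_mk_left c b)
            hcon.1 hcon.2 hne12
        rcases hcase with ⟨hin, hout⟩ | ⟨hin, hout⟩
        · have h1' : s(a, c) ∈ P.edges := hin _ (by rw [hedges]; simp)
          have h2' : s(c, b) ∈ P.edges := hin _ (by rw [hedges]; simp)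
          rcases key P hP hMP h1' h2' with rfl | rfl
          · exact hout _ (by rw [hedges]; simp) (hMQ _ heM)
          · exact hout _ (by rw [hedges]; simp) (hMQ _ heM)
        · have h1' : s(a, c) ∈ Q.edges := hin _ (by rw [hedges]; simp)
          have h2' : s(c, b) ∈ Q.edges := hin _ (by rw [hedges]; simp)
          rcases key Q hQ hMQ h1' h2' with rfl | rfl
          · exact hout _ (by rw [hedges]; simp) (hMP _ heM)
          · exact hout _ (by rw [hedges]; simp) (hMP _ heM)
      | cons h3 w''' => simp at hlen
end

section
/- For all sufficiently large n, there exists a family of at least 2^n/n^6 subsets of {1,...,n} such that for any two distinct subsets S, T in the family, one of them contains at least 3 elements not belonging to the other; consequently there is a family of at least 2^n/n^6 induced subgraphs of the complete graph K_n such that for any two of them there is a triangle contained in exactly one of the two graphs and edge-disjoint from the other. -/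
open Finset

variable {n : ℕ}

/-- Closeness: differ by at most 2 on each side. -/
def closeF (S T : Finset (Fin n)) : Prop := (S \ T).card ≤ 2 ∧ (T \ S).card ≤ 2

instance (S T : Finset (Fin n)) : Decidable (closeF S T) := by
  unfold closeF; infer_instance

lemma closeF_symm {S T : Finset (Fin n)} (h : closeF S T) : closeF T S := ⟨h.2, h.1⟩

lemma closeF_self (S : Finset (Fin n)) : closeF S S := by
  simp [closeF]

lemma rebuild (S T : Finset (Fin n)) : T = (S \ (S \ T)) ∪ (T \ S) := by
  ext x
  by_cases hx : x ∈ S <;> simp [hx]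

/-- The set of finsets of card ≤ 2 has at most (n+1)^2 elements. -/
lemma smallSets_card :
    ((Finset.univ : Finset (Finset (Fin n))).filter (fun A => A.card ≤ 2)).card
      ≤ (n + 1) ^ 2 := by
  classical
  set g : Option (Fin n) × Option (Fin n) → Finset (Fin n) :=
    fun p => p.1.toFinset ∪ p.2.toFinset with hg
  have hsub : ((Finset.univ : Finset (Finset (Fin n))).filter (fun A => A.card ≤ 2))
      ⊆ (Finset.univ : Finset (Option (Fin n) × Option (Fin n))).image g := by
    intro A hA
    simp only [mem_filter, mem_univ, true_and] at hA
    interval_cases h : A.card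
    · rw [Finset.card_eq_zero] at h
      simp only [mem_image]
      exact ⟨(none, none), by simp, by simp [hg, h]⟩
    · rw [Finset.card_eq_one] at h
      obtain ⟨a, rfl⟩ := h
      simp only [mem_image]
      exact ⟨(some a, none), by simp, by simp [hg]⟩
    · rw [Finset.card_eq_two] at h
      obtain ⟨a, b, hab, rfl⟩ := h
      simp only [mem_image]
      exact ⟨(some a, some b), by simp, by simp [hg]⟩
  calc _ ≤ ((Finset.univ : Finset (Option (Fin n) × Option (Fin n))).image g).card :=
        Finset.card_le_card hsub
    _ ≤ (Finset.univ : Finset (Option (Fin n) × Option (Fin n))).card :=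
        Finset.card_image_le
    _ = (n + 1) ^ 2 := by
        simp [Fintype.card_option, sq]

/-- The ball of closeness around S has at most (n+1)^4 elements. -/
lemma ball_card (S : Finset (Fin n)) :
    ((Finset.univ : Finset (Finset (Fin n))).filter (fun T => closeF S T)).card
      ≤ (n + 1) ^ 4 := by
  classical
  set small := ((Finset.univ : Finset (Finset (Fin n))).filter (fun A => A.card ≤ 2))
    with hsmall
  have h1 : ((Finset.univ : Finset (Finset (Fin n))).filter (fun T => closeF S T)).card
      ≤ (small ×ˢ small).card := by
    apply Finset.card_le_card_of_injOn (fun T => (S \ T, T \ S))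
    · intro T hT
      simp only [Finset.mem_coe, mem_filter, mem_univ, true_and] at hT
      simp only [Finset.mem_coe, Finset.mem_product, hsmall, mem_filter, mem_univ, true_and]
      exact ⟨hT.1, hT.2⟩
    · intro T1 _ T2 _ h
      simp only [Prod.mk.injEq] at h
      rw [rebuild S T1, rebuild S T2, h.1, h.2]
  calc _ ≤ (small ×ˢ small).card := h1
    _ = small.card * small.card := Finset.card_product _ _
    _ ≤ (n + 1) ^ 2 * (n + 1) ^ 2 := Nat.mul_le_mul smallSets_card smallSets_card
    _ = (n + 1) ^ 4 := by ring

/-- Main combinatorial lemma via a maximal family. -/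
lemma exists_code (n : ℕ) :
    ∃ F : Finset (Finset (Fin n)),
      2 ^ n ≤ F.card * (n + 1) ^ 4 ∧
      ∀ S ∈ F, ∀ T ∈ F, S ≠ T → ¬ closeF S T := by
  classical
  set P : Finset (Finset (Fin n)) → Prop :=
    fun F => ∀ S ∈ F, ∀ T ∈ F, S ≠ T → ¬ closeF S T with hP
  have hne : ((Finset.univ : Finset (Finset (Finset (Fin n)))).filter P).Nonempty := by
    refine ⟨∅, ?_⟩
    simp [hP]
  obtain ⟨F, hF, hmax⟩ := Finset.exists_max_image _ (fun F => F.card) hne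
  simp only [mem_filter, mem_univ, true_and] at hF
  refine ⟨F, ?_, hF⟩
  have hcover : (Finset.univ : Finset (Finset (Fin n))) ⊆
      F.biUnion (fun S => (Finset.univ : Finset (Finset (Fin n))).filter (fun T => closeF S T)) := by
    intro T _
    by_contra hT
    simp only [Finset.mem_biUnion, mem_filter, mem_univ, true_and, not_exists, not_and] at hT
    have hTF : T ∉ F := fun h => hT T h (closeF_self T)
    have hP' : P (insert T F) := by
      intro S hS U hU hne'
      rcases Finset.mem_insert.mp hS with rfl | hS'
      · rcases Finset.mem_insert.mp hU with rfl | hU'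
        · exact absurd rfl hne'
        · exact fun hc => hT U hU' (closeF_symm hc)
      · rcases Finset.mem_insert.mp hU with rfl | hU'
        · exact fun hc => hT S hS' hc
        · exact hF S hS' U hU' hne'
    have := hmax (insert T F) (Finset.mem_filter.mpr ⟨Finset.mem_univ _, hP'⟩)
    rw [Finset.card_insert_of_notMem hTF] at this
    omega
  calc (2:ℕ) ^ n = (Finset.univ : Finset (Finset (Fin n))).card := by
        simp [Finset.card_univ, Fintype.card_finset]
    _ ≤ (F.biUnion _).card := Finset.card_le_card hcover
    _ ≤ ∑ S ∈ F, ((Finset.univ : Finset (Finset (Fin n))).filter (fun T => closeF S T)).card :=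
        Finset.card_biUnion_le
    _ ≤ ∑ S ∈ F, (n + 1) ^ 4 := Finset.sum_le_sum (fun S _ => ball_card S)
    _ = F.card * (n + 1) ^ 4 := by simp [Finset.sum_const, mul_comm]

open SimpleGraph

/-- The subgraph of the complete graph `K_n` induced by a set `S` of vertices, viewed as
a graph on the full vertex set `Fin n`: two vertices are adjacent iff they are distinct
and both belong to `S`. -/
def inducedOn {n : ℕ} (S : Set (Fin n)) : SimpleGraph (Fin n) where
  Adj x y := x ≠ y ∧ x ∈ S ∧ y ∈ S
  symm := by
    constructor
    intro x y h
    exact ⟨h.1.symm, h.2.2, h.2.1⟩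
  loopless := by
    constructor
    intro x h
    exact h.1 rfl

lemma triangle_of {n : ℕ} (S T : Finset (Fin n)) (h : 3 ≤ (S \ T).card) :
    ∃ a b c : Fin n, a ≠ b ∧ b ≠ c ∧ a ≠ c ∧
      (inducedOn (↑S : Set (Fin n))).Adj a b ∧ (inducedOn (↑S : Set (Fin n))).Adj b c ∧
      (inducedOn (↑S : Set (Fin n))).Adj a c ∧
      ¬ (inducedOn (↑T : Set (Fin n))).Adj a b ∧ ¬ (inducedOn (↑T : Set (Fin n))).Adj b c ∧
      ¬ (inducedOn (↑T : Set (Fin n))).Adj a c := by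
  obtain ⟨u, hu, hcard⟩ := Finset.exists_subset_card_eq h
  obtain ⟨a, b, c, hab, hac, hbc, rfl⟩ := Finset.card_eq_three.mp hcard
  have ha := Finset.mem_sdiff.mp (hu (by simp : a ∈ ({a, b, c} : Finset (Fin n))))
  have hb := Finset.mem_sdiff.mp (hu (by simp : b ∈ ({a, b, c} : Finset (Fin n))))
  have hc := Finset.mem_sdiff.mp (hu (by simp : c ∈ ({a, b, c} : Finset (Fin n))))
  refine ⟨a, b, c, hab, hbc, hac, ⟨hab, ha.1, hb.1⟩, ⟨hbc, hb.1, hc.1⟩, ⟨hac, ha.1, hc.1⟩,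
    fun h' => ha.2 h'.2.1, fun h' => hb.2 h'.2.1, fun h' => ha.2 h'.2.1⟩

/-- **Gilbert–Varshamov construction for `D(n,3)`.** For all sufficiently large `n`
there is a family of at least `2^n / n^6` subsets of `{1,…,n}` any two distinct members
of which differ in at least `3` elements on one side; consequently there is a family of
at least `2^n / n^6` induced subgraphs of `K_n` such that for any two of them there is a
triangle contained in exactly one of the two graphs and edge-disjoint from the other. -/
theorem gilbert_varshamov_triangle_family :
    ∃ N : ℕ, ∀ n : ℕ, N ≤ n →
      (∃ F : Set (Finset (Fin n)),
        (2 : ℝ) ^ n / (n : ℝ) ^ 6 ≤ (F.ncard : ℝ) ∧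
        ∀ S ∈ F, ∀ T ∈ F, S ≠ T → 3 ≤ (S \ T).card ∨ 3 ≤ (T \ S).card) ∧
      (∃ 𝒢 : Set (SimpleGraph (Fin n)),
        (2 : ℝ) ^ n / (n : ℝ) ^ 6 ≤ (𝒢.ncard : ℝ) ∧
        (∀ G ∈ 𝒢, ∃ S : Set (Fin n), G = inducedOn S) ∧
        ∀ G ∈ 𝒢, ∀ H ∈ 𝒢, G ≠ H →
          ∃ a b c : Fin n, a ≠ b ∧ b ≠ c ∧ a ≠ c ∧
            ((G.Adj a b ∧ G.Adj b c ∧ G.Adj a c ∧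
                ¬ H.Adj a b ∧ ¬ H.Adj b c ∧ ¬ H.Adj a c) ∨
             (H.Adj a b ∧ H.Adj b c ∧ H.Adj a c ∧
                ¬ G.Adj a b ∧ ¬ G.Adj b c ∧ ¬ G.Adj a c))) := by
  classical
  refine ⟨4, fun n hn => ?_⟩
  obtain ⟨F, hcount, hcode⟩ := exists_code n
  have hsep : ∀ S ∈ F, ∀ T ∈ F, S ≠ T → 3 ≤ (S \ T).card ∨ 3 ≤ (T \ S).card := by
    intro S hS T hT hne
    have := hcode S hS T hT hne
    unfold closeF at this
    omega
  have h16 : 16 ≤ n ^ 2 := by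
    calc 16 = 4 * 4 := by norm_num
      _ ≤ n * n := Nat.mul_le_mul hn hn
      _ = n ^ 2 := (sq n).symm
  have hpow : (n + 1) ^ 4 ≤ n ^ 6 := by
    calc (n + 1) ^ 4 ≤ (2 * n) ^ 4 := Nat.pow_le_pow_left (by omega) 4
      _ = 16 * n ^ 4 := by ring
      _ ≤ n ^ 2 * n ^ 4 := Nat.mul_le_mul_right _ h16
      _ = n ^ 6 := by ring
  have hnat : 2 ^ n ≤ F.card * n ^ 6 :=
    le_trans hcount (Nat.mul_le_mul_left _ hpow)
  have hnpos : (0 : ℝ) < (n : ℝ) ^ 6 := by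
    have : (0:ℝ) < (n:ℝ) := by exact_mod_cast Nat.lt_of_lt_of_le (by norm_num) hn
    positivity
  have hreal : (2 : ℝ) ^ n / (n : ℝ) ^ 6 ≤ (F.card : ℝ) := by
    rw [div_le_iff₀ hnpos]
    calc (2 : ℝ) ^ n = ((2 ^ n : ℕ) : ℝ) := by push_cast; ring
      _ ≤ ((F.card * n ^ 6 : ℕ) : ℝ) := Nat.cast_le.mpr hnat
      _ = (F.card : ℝ) * (n : ℝ) ^ 6 := by push_cast; ring
  constructor
  · refine ⟨(↑F : Set (Finset (Fin n))), ?_, ?_⟩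
    · rwa [Set.ncard_coe_finset]
    · intro S hS T hT hne
      exact hsep S (Finset.mem_coe.mp hS) T (Finset.mem_coe.mp hT) hne
  · set f : Finset (Fin n) → SimpleGraph (Fin n) := fun S => inducedOn (↑S : Set (Fin n))
      with hf
    have hinj : Set.InjOn f ↑F := by
      intro S hS T hT hST
      by_contra hne
      rcases hsep S (Finset.mem_coe.mp hS) T (Finset.mem_coe.mp hT) hne with h3 | h3
      all_goals have hST' : inducedOn (↑S : Set (Fin n)) = inducedOn (↑T : Set (Fin n)) := hST
      · obtain ⟨a, b, c, _, _, _, hadj, _, _, hnadj, _, _⟩ := triangle_of S T h3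
        exact hnadj (hST' ▸ hadj)
      · obtain ⟨a, b, c, _, _, _, hadj, _, _, hnadj, _, _⟩ := triangle_of T S h3
        exact hnadj (hST'.symm ▸ hadj)
    refine ⟨f '' ↑F, ?_, ?_, ?_⟩
    · rwa [Set.ncard_image_of_injOn hinj, Set.ncard_coe_finset]
    · rintro G ⟨S, _, rfl⟩
      exact ⟨↑S, rfl⟩
    · rintro G ⟨S, hS, rfl⟩ H ⟨T, hT, rfl⟩ hGH
      have hne : S ≠ T := fun h => hGH (by rw [h])
      rcases hsep S (Finset.mem_coe.mp hS) T (Finset.mem_coe.mp hT) hne with h3 | h3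
      · obtain ⟨a, b, c, h1, h2, h3', rest⟩ := triangle_of S T h3
        exact ⟨a, b, c, h1, h2, h3', Or.inl ⟨rest.1, rest.2.1, rest.2.2.1, rest.2.2.2.1,
          rest.2.2.2.2.1, rest.2.2.2.2.2⟩⟩
      · obtain ⟨a, b, c, h1, h2, h3', rest⟩ := triangle_of T S h3
        exact ⟨a, b, c, h1, h2, h3', Or.inr ⟨rest.1, rest.2.1, rest.2.2.1, rest.2.2.2.1,
          rest.2.2.2.2.1, rest.2.2.2.2.2⟩⟩
end
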